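/- arXiv:1606.03463 — 7 statements merged into one kernel-verified Lean document; each statement's English description precedes it below -/
import Mathlib

section
/- Let (Ω, F, P) be a probability space with filtration {H_n}_{n∈ℕ} and let {R[n]}_{n∈ℕ} be a real-valued process adapted to {H_n} with R[0] a finite deterministic constant. Fix r > 0, Γ > 0, σ ∈ ℝ and ρ ∈ (0,1), and suppose for every n ∈ ℕ: (i) E[exp(r(R[n+1]−R[n])) | H_n] ≤ Γ almost surely, and (ii) almost surely on the event {R[n] ≥ σ}, E[exp(r(R[n+1]−R[n])) | H_n] ≤ ρ. Then for every n ∈ ℕ: E[exp(r·R[n])] ≤ ρ^n · exp(r·R[0]) + ((1−ρ^n)/(1−ρ))·Γ·exp(r·σ). -/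
open MeasureTheory

/-- Lemma 1 (Hajek's drift lemma): a process with uniformly bounded conditional
exponential increments and conditional contraction above level σ has exponential
moments bounded by ρ^n e^{rR[0]} + ((1-ρ^n)/(1-ρ)) Γ e^{rσ}. -/
theorem stmt_2 {Ω : Type*} {m0 : MeasurableSpace Ω} (μ : Measure Ω) [IsProbabilityMeasure μ]
    (ℱ : Filtration ℕ m0) (R : ℕ → Ω → ℝ) (hadapted : Adapted ℱ R)
    (R0 : ℝ) (hR0 : ∀ ω, R 0 ω = R0)
    (r Γ σ ρ : ℝ) (hr : 0 < r) (hΓ : 0 < Γ) (hρ0 : 0 < ρ) (hρ1 : ρ < 1)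
    (hint : ∀ n, Integrable (fun ω => Real.exp (r * R n ω)) μ)
    (hintdiff : ∀ n, Integrable (fun ω => Real.exp (r * (R (n + 1) ω - R n ω))) μ)
    (hΓbound : ∀ n, ∀ᵐ ω ∂μ,
      (μ[fun ω' => Real.exp (r * (R (n + 1) ω' - R n ω')) | ℱ n]) ω ≤ Γ)
    (hdrift : ∀ n, ∀ᵐ ω ∂μ, σ ≤ R n ω →
      (μ[fun ω' => Real.exp (r * (R (n + 1) ω' - R n ω')) | ℱ n]) ω ≤ ρ) :
    ∀ n : ℕ, ∫ ω, Real.exp (r * R n ω) ∂μ ≤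
      ρ ^ n * Real.exp (r * R0) + ((1 - ρ ^ n) / (1 - ρ)) * Γ * Real.exp (r * σ) := by
  -- key recursion step
  have key : ∀ n, ∫ ω, Real.exp (r * R (n+1) ω) ∂μ ≤
      ρ * ∫ ω, Real.exp (r * R n ω) ∂μ + Γ * Real.exp (r * σ) := by
    intro n
    set g : Ω → ℝ := fun ω => Real.exp (r * (R (n + 1) ω - R n ω)) with hg
    set f : Ω → ℝ := fun ω => Real.exp (r * R n ω) with hf
    have hfsm : StronglyMeasurable[ℱ n] f :=
      (Real.continuous_exp.comp (continuous_const.mul continuous_id)).comp_stronglyMeasurable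
        (hadapted n).stronglyMeasurable
    have hfg : f * g = fun ω => Real.exp (r * R (n+1) ω) := by
      funext ω
      simp only [hf, hg, Pi.mul_apply, ← Real.exp_add]
      ring_nf
    have hpull : μ[f * g | ℱ n] =ᵐ[μ] f * μ[g | ℱ n] :=
      condExp_mul_of_stronglyMeasurable_left hfsm (hfg ▸ hint (n+1)) (hintdiff n)
    have hnonneg : 0 ≤ᵐ[μ] μ[g | ℱ n] :=
      condExp_nonneg (Filter.Eventually.of_forall fun ω => (Real.exp_pos _).le)
    have h1 : ∫ ω, Real.exp (r * R (n+1) ω) ∂μ = ∫ ω, (f ω) * (μ[g | ℱ n]) ω ∂μ := by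
      rw [← hfg, ← integral_condExp (ℱ.le n)]
      exact integral_congr_ae hpull
    rw [h1]
    have hintL : Integrable (fun ω => (f ω) * (μ[g | ℱ n]) ω) μ :=
      (integrable_condExp.congr hpull)
    have hintR : Integrable (fun ω => ρ * f ω + Γ * Real.exp (r * σ)) μ :=
      ((hint n).const_mul ρ).add (integrable_const _)
    have hmono : ∀ᵐ ω ∂μ, (f ω) * (μ[g | ℱ n]) ω ≤ ρ * f ω + Γ * Real.exp (r * σ) := by
      filter_upwards [hΓbound n, hdrift n, hnonneg] with ω hΓb hd hnn
      by_cases hcase : σ ≤ R n ω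
      · calc f ω * (μ[g | ℱ n]) ω ≤ f ω * ρ :=
              mul_le_mul_of_nonneg_left (hd hcase) (Real.exp_pos _).le
          _ ≤ ρ * f ω + Γ * Real.exp (r * σ) := by
              have : 0 ≤ Γ * Real.exp (r * σ) := by positivity
              linarith [mul_comm (f ω) ρ]
      · have hfle : f ω ≤ Real.exp (r * σ) := by
          apply Real.exp_le_exp.mpr
          exact mul_le_mul_of_nonneg_left (le_of_not_ge hcase) hr.le
        calc f ω * (μ[g | ℱ n]) ω ≤ Real.exp (r * σ) * Γ := by
              apply mul_le_mul hfle hΓb hnn (Real.exp_pos _).le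
          _ ≤ ρ * f ω + Γ * Real.exp (r * σ) := by
              have : 0 ≤ ρ * f ω := by positivity
              linarith [mul_comm (Real.exp (r * σ)) Γ]
    calc ∫ ω, (f ω) * (μ[g | ℱ n]) ω ∂μ
        ≤ ∫ ω, ρ * f ω + Γ * Real.exp (r * σ) ∂μ := integral_mono_ae hintL hintR hmono
      _ = ρ * ∫ ω, f ω ∂μ + Γ * Real.exp (r * σ) := by
          rw [integral_add ((hint n).const_mul ρ) (integrable_const _), integral_const_mul,
            integral_const]
          simp [hf]
  intro n
  induction n with
  | zero =>
    simp only [pow_zero, one_mul, sub_self, zero_div, zero_mul, add_zero]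
    have : ∀ ω, Real.exp (r * R 0 ω) = Real.exp (r * R0) := fun ω => by rw [hR0]
    rw [integral_congr_ae (Filter.Eventually.of_forall this), integral_const]
    simp
  | succ n ih =>
    have h1ρ : (0:ℝ) < 1 - ρ := by linarith
    calc ∫ ω, Real.exp (r * R (n+1) ω) ∂μ
        ≤ ρ * ∫ ω, Real.exp (r * R n ω) ∂μ + Γ * Real.exp (r * σ) := key n
      _ ≤ ρ * (ρ ^ n * Real.exp (r * R0) + ((1 - ρ ^ n) / (1 - ρ)) * Γ * Real.exp (r * σ))
            + Γ * Real.exp (r * σ) := by nlinarith [ih]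
      _ = ρ ^ (n+1) * Real.exp (r * R0) + ((1 - ρ ^ (n+1)) / (1 - ρ)) * Γ * Real.exp (r * σ) := by
          field_simp
          ring
end

section
/- Let (Ω, F, P) be a probability space with filtration {H_n}_{n∈ℕ} and let {R[n]}_{n∈ℕ} be a real-valued process adapted to {H_n} with R[0] = 0. Fix r > 0, Γ > 0, σ ≥ 0 and ρ ∈ (0,1), and suppose for every n ∈ ℕ: (i) E[exp(r(R[n+1]−R[n])) | H_n] ≤ Γ almost surely, and (ii) almost surely on the event {R[n] ≥ σ}, E[exp(r(R[n+1]−R[n])) | H_n] ≤ ρ. Then for every n ∈ ℕ: E[exp(r·R[n])] ≤ 1 + Γ·exp(r·σ)/(1−ρ); in particular the exponential moments E[exp(r·R[n])] are bounded uniformly in n. -/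
open MeasureTheory

/-- Corollary 1 (exponential decay): for a process started at 0 with Hajek's drift
conditions, the exponential moments are uniformly bounded by 1 + Γe^{rσ}/(1-ρ). -/
theorem stmt_3 {Ω : Type*} {m0 : MeasurableSpace Ω} (μ : Measure Ω) [IsProbabilityMeasure μ]
    (ℱ : Filtration ℕ m0) (R : ℕ → Ω → ℝ) (hadapted : Adapted ℱ R)
    (hR0 : ∀ ω, R 0 ω = 0)
    (r Γ σ ρ : ℝ) (hr : 0 < r) (hΓ : 0 < Γ) (hσ : 0 ≤ σ) (hρ0 : 0 < ρ) (hρ1 : ρ < 1)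
    (hint : ∀ n, Integrable (fun ω => Real.exp (r * R n ω)) μ)
    (hintdiff : ∀ n, Integrable (fun ω => Real.exp (r * (R (n + 1) ω - R n ω))) μ)
    (hΓbound : ∀ n, ∀ᵐ ω ∂μ,
      (μ[fun ω' => Real.exp (r * (R (n + 1) ω' - R n ω')) | ℱ n]) ω ≤ Γ)
    (hdrift : ∀ n, ∀ᵐ ω ∂μ, σ ≤ R n ω →
      (μ[fun ω' => Real.exp (r * (R (n + 1) ω' - R n ω')) | ℱ n]) ω ≤ ρ) :
    ∀ n : ℕ, ∫ ω, Real.exp (r * R n ω) ∂μ ≤ 1 + Γ * Real.exp (r * σ) / (1 - ρ) := by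
  have hρ' : 0 < 1 - ρ := by linarith
  have hE : 0 < Γ * Real.exp (r * σ) := by positivity
  -- step inequality
  have step : ∀ n, ∫ ω, Real.exp (r * R (n + 1) ω) ∂μ
      ≤ ρ * ∫ ω, Real.exp (r * R n ω) ∂μ + Γ * Real.exp (r * σ) := by
    intro n
    set g : Ω → ℝ := fun ω => Real.exp (r * (R (n + 1) ω - R n ω)) with hg
    set f : Ω → ℝ := fun ω => Real.exp (r * R n ω) with hf
    have hfmeas : StronglyMeasurable[ℱ n] f :=
      Real.continuous_exp.comp_stronglyMeasurable ((hadapted n).const_mul r).stronglyMeasurable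
    have hprod : (fun ω => Real.exp (r * R (n + 1) ω)) = f * g := by
      funext ω
      simp only [hf, hg, Pi.mul_apply, ← Real.exp_add]
      ring_nf
    have hfg : Integrable (f * g) μ := hprod ▸ hint (n + 1)
    have key : μ[f * g | ℱ n] =ᵐ[μ] f * μ[g | ℱ n] :=
      condExp_mul_of_stronglyMeasurable_left hfmeas hfg (hintdiff n)
    have hnn : 0 ≤ᵐ[μ] μ[g | ℱ n] :=
      condExp_nonneg (Filter.Eventually.of_forall fun ω => (Real.exp_pos _).le)
    -- a.e. bound on f * condexp g
    have hbound : ∀ᵐ ω ∂μ, (f * μ[g | ℱ n]) ω ≤ ρ * f ω + Γ * Real.exp (r * σ) := by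
      filter_upwards [hΓbound n, hdrift n, hnn] with ω hΓω hdω h0ω
      simp only [Pi.mul_apply]
      have hfpos : 0 < f ω := Real.exp_pos _
      rcases le_or_gt σ (R n ω) with h | h
      · have := hdω h
        nlinarith
      · have hfle : f ω ≤ Real.exp (r * σ) := by
          apply Real.exp_le_exp.2
          nlinarith
        nlinarith
    calc ∫ ω, Real.exp (r * R (n + 1) ω) ∂μ = ∫ ω, (f * g) ω ∂μ := by rw [hprod]
      _ = ∫ ω, (μ[f * g | ℱ n]) ω ∂μ := (integral_condExp (ℱ.le n)).symm
      _ = ∫ ω, (f * μ[g | ℱ n]) ω ∂μ := integral_congr_ae key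
      _ ≤ ∫ ω, (ρ * f ω + Γ * Real.exp (r * σ)) ∂μ := by
          refine integral_mono_ae (integrable_condExp.congr key) ?_ hbound
          exact ((hint n).const_mul ρ).add (integrable_const _)
      _ = ρ * ∫ ω, f ω ∂μ + Γ * Real.exp (r * σ) := by
          rw [integral_add (((hint n)).const_mul ρ) (integrable_const _),
            integral_const_mul, integral_const]
          simp [hf]
  intro n
  induction n with
  | zero =>
      have : ∫ ω, Real.exp (r * R 0 ω) ∂μ = 1 := by
        simp [hR0]
      rw [this]
      have : 0 ≤ Γ * Real.exp (r * σ) / (1 - ρ) := by positivity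
      linarith
  | succ n ih =>
      have h1 := step n
      have h2 : ρ * ∫ ω, Real.exp (r * R n ω) ∂μ
          ≤ ρ * (1 + Γ * Real.exp (r * σ) / (1 - ρ)) :=
        mul_le_mul_of_nonneg_left ih hρ0.le
      have h3 : ρ * (1 + Γ * Real.exp (r * σ) / (1 - ρ)) + Γ * Real.exp (r * σ)
          ≤ 1 + Γ * Real.exp (r * σ) / (1 - ρ) := by
        rw [div_eq_mul_inv] at *
        have : (1 - ρ) * (1 - ρ)⁻¹ = 1 := mul_inv_cancel₀ hρ'.ne'
        nlinarith
      linarith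
end

section
/- Let X and K be random variables on a probability space with |X| ≤ K almost surely, and let η > 0, B > 0, ξ > 0 be constants such that E[exp(η·K)] ≤ B and E[X] ≤ −ξ/2. Then for every r with 0 < r ≤ min{η, ξη²/(8B)}: E[exp(r·X)] ≤ 1 − rξ/2 + (2B/η²)·r², and moreover 1 − rξ/2 + (2B/η²)·r² ≤ 1 − rξ/4 < 1. -/
open MeasureTheory

/-- If `f a = 0` and the derivative of `f` is nonnegative on `[a, ∞)`, then `f b ≥ f a` for
`b ≥ a`. -/
lemma le_of_hasDerivAt_nonneg {f f' : ℝ → ℝ} {a b : ℝ}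
    (hd : ∀ x, HasDerivAt f (f' x) x) (h' : ∀ x, a ≤ x → 0 ≤ f' x) (hab : a ≤ b) :
    f a ≤ f b := by
  have hmono : MonotoneOn f (Set.Ici a) := by
    apply monotoneOn_of_deriv_nonneg (convex_Ici a)
    · exact fun x _ => (hd x).continuousAt.continuousWithinAt
    · exact fun x _ => ((hd x).differentiableAt).differentiableWithinAt
    · intro x hx
      rw [interior_Ici] at hx
      rw [(hd x).deriv]
      exact h' x (le_of_lt hx)
  exact hmono (Set.self_mem_Ici) hab hab

lemma psi_nonneg {u : ℝ} (hu : 0 ≤ u) : 0 ≤ u * Real.exp u - Real.exp u + 1 := by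
  have h := Real.add_one_le_exp (-u)
  have he : (0:ℝ) < Real.exp u := Real.exp_pos u
  have : (-u + 1) * Real.exp u ≤ Real.exp (-u) * Real.exp u :=
    mul_le_mul_of_nonneg_right h he.le
  rw [← Real.exp_add] at this
  simp at this
  nlinarith

lemma phi_nonneg {u : ℝ} (hu : 0 ≤ u) :
    0 ≤ u * Real.exp u + u - 2 * Real.exp u + 2 := by
  have key : ∀ x, HasDerivAt (fun y => y * Real.exp y + y - 2 * Real.exp y + 2)
      (x * Real.exp x - Real.exp x + 1) x := by
    intro x
    have h1 : HasDerivAt (fun y : ℝ => y * Real.exp y)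
        (1 * Real.exp x + x * Real.exp x) x :=
      (hasDerivAt_id' (x := x)).mul (Real.hasDerivAt_exp x)
    have h2 := ((h1.add (hasDerivAt_id' (x := x))).sub
      ((Real.hasDerivAt_exp x).const_mul 2)).add_const 2
    exact h2.congr_deriv (by ring)
  have := le_of_hasDerivAt_nonneg key (fun x hx => psi_nonneg hx) hu
  simpa using this

lemma quad_exp_bound {u : ℝ} (hu : 0 ≤ u) :
    Real.exp u - 1 - u ≤ u ^ 2 / 2 * Real.exp u := by
  have key : ∀ x, HasDerivAt (fun y => y ^ 2 / 2 * Real.exp y - Real.exp y + 1 + y)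
      (x * Real.exp x + x ^ 2 / 2 * Real.exp x - Real.exp x + 1) x := by
    intro x
    have h1 : HasDerivAt (fun y : ℝ => y ^ 2 / 2) x x := by
      have := (hasDerivAt_pow 2 x).div_const 2
      exact this.congr_deriv (by push_cast; ring)
    have h2 := (h1.mul (Real.hasDerivAt_exp x))
    have h3 := ((h2.sub (Real.hasDerivAt_exp x)).add_const 1).add (hasDerivAt_id' (x := x))
    exact h3
  have hderiv : ∀ x, 0 ≤ x → 0 ≤ x * Real.exp x + x ^ 2 / 2 * Real.exp x - Real.exp x + 1 := by
    intro x hx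
    have := psi_nonneg hx
    have he := (Real.exp_pos x).le
    nlinarith
  have := le_of_hasDerivAt_nonneg key hderiv hu
  simp at this
  nlinarith

/-- Monotonicity of `(e^u - 1 - u)/u²`: for `0 ≤ u ≤ v`,
`v² (e^u - 1 - u) ≤ u² (e^v - 1 - v)`. -/
lemma mono2 {u v : ℝ} (hu : 0 ≤ u) (huv : u ≤ v) :
    v ^ 2 * (Real.exp u - 1 - u) ≤ u ^ 2 * (Real.exp v - 1 - v) := by
  set c : ℝ := Real.exp u - 1 - u with hc
  have hcnn : 0 ≤ c := by have := Real.add_one_le_exp u; simp [hc]; linarith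
  -- h(w) = u² (e^w - 1 - w) - w² c, h(u) = 0, show h(v) ≥ 0
  have key : ∀ x, HasDerivAt (fun w => u ^ 2 * (Real.exp w - 1 - w) - w ^ 2 * c)
      (u ^ 2 * (Real.exp x - 1) - 2 * x * c) x := by
    intro x
    have h1 : HasDerivAt (fun w : ℝ => Real.exp w - 1 - w) (Real.exp x - 1) x := by
      exact ((Real.hasDerivAt_exp x).sub_const 1).sub (hasDerivAt_id' (x := x))
    have h2 : HasDerivAt (fun w : ℝ => w ^ 2 * c) ((2 * x ^ 1) * c) x :=
      (hasDerivAt_pow 2 x).mul_const c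
    have h3 := (h1.const_mul (u ^ 2)).sub h2
    exact h3.congr_deriv (by ring)
  have hderiv : ∀ x, u ≤ x → 0 ≤ u ^ 2 * (Real.exp x - 1) - 2 * x * c := by
    -- this itself via derivative: at x = u it is u * φ(u) ≥ 0, derivative is u² e^x - 2c ≥ 0
    intro x hx
    have key2 : ∀ y, HasDerivAt (fun w => u ^ 2 * (Real.exp w - 1) - 2 * w * c)
        (u ^ 2 * Real.exp y - 2 * c) y := by
      intro y
      have h1 : HasDerivAt (fun w : ℝ => Real.exp w - 1) (Real.exp y) y := by
        simpa using (Real.hasDerivAt_exp y).sub_const 1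
      have h2 : HasDerivAt (fun w : ℝ => 2 * w * c) (2 * c) y := by
        have h := (hasDerivAt_id' (x := y)).const_mul (2 * c)
        simp only [mul_one] at h
        exact h.congr_of_eventuallyEq (Filter.Eventually.of_forall fun w => show 2 * w * c = 2 * c * w by ring)
      have h3 := (h1.const_mul (u ^ 2)).sub h2
      exact h3
    have hd2 : ∀ y, u ≤ y → 0 ≤ u ^ 2 * Real.exp y - 2 * c := by
      intro y hy
      have hq := quad_exp_bound hu
      have hmono : Real.exp u ≤ Real.exp y := Real.exp_le_exp.2 hy
      have := (Real.exp_pos u).le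
      nlinarith
    have hstart : 0 ≤ u ^ 2 * (Real.exp u - 1) - 2 * u * c := by
      have := phi_nonneg hu
      have := (Real.exp_pos u).le
      nlinarith [phi_nonneg hu]
    have := le_of_hasDerivAt_nonneg key2 hd2 hx
    linarith
  have hstart : u ^ 2 * (Real.exp u - 1 - u) - u ^ 2 * c = 0 := by rw [hc]; ring
  have := le_of_hasDerivAt_nonneg key hderiv huv
  nlinarith

/-- Key pointwise bound: if `|t| ≤ v`, then `v² (e^t - 1 - t) ≤ t² e^v`. -/
lemma key_pointwise {t v : ℝ} (ht : |t| ≤ v) :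
    v ^ 2 * (Real.exp t - 1 - t) ≤ t ^ 2 * Real.exp v := by
  have hv : 0 ≤ v := le_trans (abs_nonneg t) ht
  have habs : Real.exp t - 1 - t ≤ Real.exp |t| - 1 - |t| := by
    rcases le_or_gt 0 t with h | h
    · rw [abs_of_nonneg h]
    · rw [abs_of_neg h]
      have hs : -t < Real.sinh (-t) := Real.self_lt_sinh_iff.2 (by linarith)
      rw [Real.sinh_eq] at hs
      simp only [neg_neg] at hs
      linarith
  have h1 : v ^ 2 * (Real.exp t - 1 - t) ≤ v ^ 2 * (Real.exp |t| - 1 - |t|) := by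
    apply mul_le_mul_of_nonneg_left habs (by positivity)
  have h2 := mono2 (abs_nonneg t) ht
  have h3 : |t| ^ 2 * (Real.exp v - 1 - v) ≤ |t| ^ 2 * Real.exp v := by
    apply mul_le_mul_of_nonneg_left _ (by positivity)
    linarith
  rw [sq_abs] at h2 h3
  linarith

/-- The core computation in Lemma 2: negative drift plus an exponential-type bound on
the increment magnitude yields strict contraction of the exponential moment. -/
theorem stmt_5 {Ω : Type*} [MeasurableSpace Ω] (μ : Measure Ω) [IsProbabilityMeasure μ]
    (X K : Ω → ℝ) (hXmeas : Measurable X) (hKmeas : Measurable K)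
    (hXK : ∀ᵐ ω ∂μ, |X ω| ≤ K ω)
    (η B ξ : ℝ) (hη : 0 < η) (hB : 0 < B) (hξ : 0 < ξ)
    (hKint : Integrable (fun ω => Real.exp (η * K ω)) μ)
    (hKbound : ∫ ω, Real.exp (η * K ω) ∂μ ≤ B)
    (hXmean : ∫ ω, X ω ∂μ ≤ -ξ / 2) :
    ∀ r : ℝ, 0 < r → r ≤ min η (ξ * η ^ 2 / (8 * B)) →
      (∫ ω, Real.exp (r * X ω) ∂μ ≤ 1 - r * ξ / 2 + (2 * B / η ^ 2) * r ^ 2) ∧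
      1 - r * ξ / 2 + (2 * B / η ^ 2) * r ^ 2 ≤ 1 - r * ξ / 4 ∧
      1 - r * ξ / 4 < 1 := by
  intro r hr hrmin
  have hrη : r ≤ η := le_trans hrmin (min_le_left _ _)
  have hrξ : r ≤ ξ * η ^ 2 / (8 * B) := le_trans hrmin (min_le_right _ _)
  -- Integrability of X
  have hXint : Integrable X μ := by
    apply Integrable.mono (hKint.const_mul (1 / η)) hXmeas.aestronglyMeasurable
    filter_upwards [hXK] with ω hω
    have hK0 : 0 ≤ K ω := le_trans (abs_nonneg _) hω
    have he := Real.add_one_le_exp (η * K ω)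
    have hep : (0:ℝ) < Real.exp (η * K ω) := Real.exp_pos _
    simp only [Real.norm_eq_abs]
    rw [abs_of_pos (by positivity : (0:ℝ) < 1 / η * Real.exp (η * K ω))]
    rw [div_mul_eq_mul_div, one_mul, le_div_iff₀ hη]
    nlinarith
  -- Integrability of exp (r * X)
  have hrXint : Integrable (fun ω => Real.exp (r * X ω)) μ := by
    apply Integrable.mono hKint ((Real.measurable_exp.comp (hXmeas.const_mul r)).aestronglyMeasurable)
    filter_upwards [hXK] with ω hω
    have hK0 : 0 ≤ K ω := le_trans (abs_nonneg _) hω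
    simp only [Function.comp, Real.norm_eq_abs]
    rw [abs_of_pos (Real.exp_pos _), abs_of_pos (Real.exp_pos _)]
    apply Real.exp_le_exp.2
    have hX : X ω ≤ K ω := le_trans (le_abs_self _) hω
    nlinarith
  -- pointwise bound
  have hpt : ∀ᵐ ω ∂μ, Real.exp (r * X ω) ≤
      1 + r * X ω + r ^ 2 / η ^ 2 * Real.exp (η * K ω) := by
    filter_upwards [hXK] with ω hω
    have hK0 : 0 ≤ K ω := le_trans (abs_nonneg _) hω
    have habs : |r * X ω| ≤ η * K ω := by
      rw [abs_mul, abs_of_pos hr]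
      have : r * |X ω| ≤ r * K ω := mul_le_mul_of_nonneg_left hω hr.le
      nlinarith
    have hk := key_pointwise habs
    rcases eq_or_lt_of_le hK0 with h0 | h0
    · -- K ω = 0, hence X ω = 0
      have hX0 : X ω = 0 := by
        have := hω; rw [← h0] at this
        exact abs_eq_zero.1 (le_antisymm this (abs_nonneg _))
      rw [hX0, ← h0]
      simp
      positivity
    · have hv : (0:ℝ) < η * K ω := by positivity
      have hX2' : (r * X ω) ^ 2 * Real.exp (η * K ω) ≤
          r ^ 2 * K ω ^ 2 * Real.exp (η * K ω) := by
        have h1 : |X ω| ^ 2 ≤ K ω ^ 2 := by nlinarith [abs_nonneg (X ω)]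
        rw [sq_abs] at h1
        have : (r * X ω) ^ 2 ≤ r ^ 2 * K ω ^ 2 := by nlinarith [sq_nonneg r]
        exact mul_le_mul_of_nonneg_right this (Real.exp_pos _).le
      -- divide hk by (η K)²
      have hdiv : Real.exp (r * X ω) - 1 - r * X ω ≤
          r ^ 2 / η ^ 2 * Real.exp (η * K ω) := by
        have hv2 : (0:ℝ) < (η * K ω) ^ 2 := by positivity
        rw [div_mul_eq_mul_div, le_div_iff₀ (by positivity : (0:ℝ) < η ^ 2)]
        have hle := le_trans hk hX2'
        nlinarith [Real.exp_pos (η * K ω), mul_pos h0 h0]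
      linarith
  -- integrate
  have hRHSint : Integrable
      (fun ω => 1 + r * X ω + r ^ 2 / η ^ 2 * Real.exp (η * K ω)) μ := by
    exact ((integrable_const 1).add (hXint.const_mul r)).add (hKint.const_mul _)
  have hint : ∫ ω, Real.exp (r * X ω) ∂μ ≤
      ∫ ω, (1 + r * X ω + r ^ 2 / η ^ 2 * Real.exp (η * K ω)) ∂μ :=
    integral_mono_ae hrXint hRHSint hpt
  have i1 : Integrable (fun ω => 1 + r * X ω) μ := (integrable_const 1).add (hXint.const_mul r)
  have heq : ∫ ω, (1 + r * X ω + r ^ 2 / η ^ 2 * Real.exp (η * K ω)) ∂μ =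
      1 + r * ∫ ω, X ω ∂μ + r ^ 2 / η ^ 2 * ∫ ω, Real.exp (η * K ω) ∂μ := by
    rw [integral_add i1 (hKint.const_mul _),
        integral_add (integrable_const 1) (hXint.const_mul r),
        integral_const, integral_const_mul, integral_const_mul]
    simp
  have hexpKnn : (0:ℝ) ≤ ∫ ω, Real.exp (η * K ω) ∂μ :=
    integral_nonneg fun ω => (Real.exp_pos _).le
  constructor
  · rw [heq] at hint
    have h1 : r * ∫ ω, X ω ∂μ ≤ r * (-ξ / 2) := mul_le_mul_of_nonneg_left hXmean hr.le
    have h2 : r ^ 2 / η ^ 2 * ∫ ω, Real.exp (η * K ω) ∂μ ≤ r ^ 2 / η ^ 2 * B :=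
      mul_le_mul_of_nonneg_left hKbound (by positivity)
    have h3 : r ^ 2 / η ^ 2 * B ≤ 2 * B / η ^ 2 * r ^ 2 := by
      rw [div_mul_eq_mul_div, div_mul_eq_mul_div, div_le_div_iff₀ (by positivity) (by positivity)]
      nlinarith [mul_nonneg (mul_nonneg hB.le (sq_nonneg r)) (sq_nonneg η)]
    linarith
  constructor
  · have h8 : r * (8 * B) ≤ ξ * η ^ 2 := (le_div_iff₀ (by positivity)).1 hrξ
    have : 2 * B / η ^ 2 * r ^ 2 ≤ r * ξ / 4 := by
      rw [div_mul_eq_mul_div, div_le_div_iff₀ (by positivity) (by norm_num : (0:ℝ) < 4)]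
      nlinarith [mul_le_mul_of_nonneg_left h8 hr.le]
    linarith
  · nlinarith
end

section
/- Let (Ω, F, P) be a probability space, L a positive integer, and for each n ∈ ℕ let T[n] and z_1[n], …, z_L[n] be real random variables with T[n] ≥ 1 almost surely. Let c_1, …, c_L ∈ ℝ. Define the virtual queue processes by Q_l[0] = 0 and Q_l[n+1] = max(Q_l[n] + z_l[n] − c_l·T[n], 0) for each l. Suppose there exist constants r > 0 and D > 0 such that E[exp(r·‖Q[n]‖)] ≤ D for every n ∈ ℕ, where ‖Q[n]‖ is the Euclidean norm of the vector (Q_1[n], …, Q_L[n]). Then with probability 1, for every l ∈ {1, …, L}: limsup_{N→∞} (Σ_{n=0}^{N−1} z_l[n]) / (Σ_{n=0}^{N−1} T[n]) ≤ c_l. -/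
open MeasureTheory Filter

/-- Theorem 1 (feasibility): a uniform exponential moment bound on the virtual queue
vector forces all time-average resource constraints to hold almost surely. -/
theorem stmt_6 {Ω : Type*} [MeasurableSpace Ω] (μ : Measure Ω) [IsProbabilityMeasure μ]
    (L : ℕ) (hL : 0 < L)
    (T : ℕ → Ω → ℝ) (z : Fin L → ℕ → Ω → ℝ) (c : Fin L → ℝ)
    (hTmeas : ∀ n, Measurable (T n)) (hzmeas : ∀ l n, Measurable (z l n))
    (hT1 : ∀ n, ∀ᵐ ω ∂μ, 1 ≤ T n ω)
    (Q : Fin L → ℕ → Ω → ℝ)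
    (hQ0 : ∀ l ω, Q l 0 ω = 0)
    (hQrec : ∀ l n ω, Q l (n + 1) ω = max (Q l n ω + z l n ω - c l * T n ω) 0)
    (r D : ℝ) (hr : 0 < r) (hD : 0 < D)
    (hint : ∀ n, Integrable (fun ω => Real.exp (r * Real.sqrt (∑ l, (Q l n ω) ^ 2))) μ)
    (hbound : ∀ n, ∫ ω, Real.exp (r * Real.sqrt (∑ l, (Q l n ω) ^ 2)) ∂μ ≤ D) :
    ∀ᵐ ω ∂μ, ∀ l : Fin L,
      limsup (fun N : ℕ =>
          (((∑ n ∈ Finset.range N, z l n ω) / (∑ n ∈ Finset.range N, T n ω) : ℝ) : EReal))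
        atTop ≤ (c l : EReal) := by
  classical
  set NQ : ℕ → Ω → ℝ := fun n ω => Real.sqrt (∑ l, (Q l n ω) ^ 2) with hNQ
  have hQnonneg : ∀ l n ω, 0 ≤ Q l n ω := by
    intro l n ω
    cases n with
    | zero => simp [hQ0]
    | succ n => rw [hQrec]; exact le_max_right _ _
  have hQleNQ : ∀ l n ω, Q l n ω ≤ NQ n ω := by
    intro l n ω
    have h1 : (Q l n ω) ^ 2 ≤ ∑ i, (Q i n ω) ^ 2 :=
      Finset.single_le_sum (f := fun i => (Q i n ω) ^ 2) (fun i _ => sq_nonneg _) (Finset.mem_univ l)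
    calc Q l n ω = Real.sqrt ((Q l n ω) ^ 2) := (Real.sqrt_sq (hQnonneg l n ω)).symm
      _ ≤ NQ n ω := Real.sqrt_le_sqrt h1
  have hNQnonneg : ∀ n ω, 0 ≤ NQ n ω := fun n ω => Real.sqrt_nonneg _
  -- Borel–Cantelli: for each k, a.s. eventually NQ n ω < (1/(k+1)) * n
  have hBC : ∀ k : ℕ, ∀ᵐ ω ∂μ, ∀ᶠ n in atTop, ¬ ((1 / (k + 1 : ℝ)) * n ≤ NQ n ω) := by
    intro k
    set ε : ℝ := 1 / (k + 1 : ℝ) with hε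
    have hεpos : 0 < ε := by positivity
    set s : ℕ → Set Ω := fun n => {ω | ε * n ≤ NQ n ω} with hs
    have hμs : ∀ n, μ (s n) ≤ ENNReal.ofReal (D * Real.exp (-(r * ε)) ^ n) := by
      intro n
      have hset : s n = {ω | Real.exp (r * (ε * n)) ≤ Real.exp (r * NQ n ω)} := by
        ext ω
        simp only [hs, Set.mem_setOf_eq, Real.exp_le_exp]
        exact (mul_le_mul_iff_right₀ hr).symm
      have hmarkov := mul_meas_ge_le_integral_of_nonneg
        (f := fun ω => Real.exp (r * NQ n ω)) (μ := μ)
        (Filter.Eventually.of_forall fun ω => (Real.exp_pos _).le)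
        (hint n) (Real.exp (r * (ε * n)))
      have hle : Real.exp (r * (ε * n)) * (μ (s n)).toReal ≤ D := by
        rw [hset]; exact hmarkov.trans (hbound n)
      have hepos : (0 : ℝ) < Real.exp (r * (ε * n)) := Real.exp_pos _
      have htoReal : (μ (s n)).toReal ≤ D * Real.exp (-(r * ε)) ^ n := by
        have h2 : (μ (s n)).toReal ≤ D / Real.exp (r * (ε * n)) := by
          rw [le_div_iff₀ hepos]; linarith [hle]
        calc (μ (s n)).toReal ≤ D / Real.exp (r * (ε * n)) := h2
          _ = D * Real.exp (-(r * ε)) ^ n := by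
              rw [← Real.exp_nat_mul, div_eq_mul_inv, ← Real.exp_neg]
              ring_nf
      rw [ENNReal.le_ofReal_iff_toReal_le (measure_ne_top μ _)]
      · exact htoReal
      · positivity
    have hsum : (∑' n, μ (s n)) ≠ ⊤ := by
      have hx1 : ENNReal.ofReal (Real.exp (-(r * ε))) < 1 := by
        rw [ENNReal.ofReal_lt_one]
        exact Real.exp_lt_one_iff.mpr (by nlinarith)
      have hb : (∑' n, μ (s n)) ≤ ∑' n, ENNReal.ofReal (D * Real.exp (-(r * ε)) ^ n) :=
        ENNReal.tsum_le_tsum hμs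
      have heq : (∑' n, ENNReal.ofReal (D * Real.exp (-(r * ε)) ^ n))
          = ENNReal.ofReal D * (1 - ENNReal.ofReal (Real.exp (-(r * ε))))⁻¹ := by
        have : ∀ n : ℕ, ENNReal.ofReal (D * Real.exp (-(r * ε)) ^ n)
            = ENNReal.ofReal D * ENNReal.ofReal (Real.exp (-(r * ε))) ^ n := by
          intro n
          rw [ENNReal.ofReal_mul hD.le, ENNReal.ofReal_pow (Real.exp_pos _).le]
        simp_rw [this]
        rw [ENNReal.tsum_mul_left, ENNReal.tsum_geometric]
      have hfin : ENNReal.ofReal D * (1 - ENNReal.ofReal (Real.exp (-(r * ε))))⁻¹ ≠ ⊤ := by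
        apply ENNReal.mul_ne_top ENNReal.ofReal_ne_top
        rw [ENNReal.inv_ne_top]
        exact (tsub_pos_of_lt hx1).ne'
      exact ne_top_of_le_ne_top (heq ▸ hfin) hb
    exact ae_eventually_notMem hsum
  have hT : ∀ᵐ ω ∂μ, ∀ n, 1 ≤ T n ω := ae_all_iff.mpr hT1
  have hBCall : ∀ᵐ ω ∂μ, ∀ k : ℕ, ∀ᶠ n in atTop, ¬ ((1 / (k + 1 : ℝ)) * n ≤ NQ n ω) :=
    ae_all_iff.mpr hBC
  filter_upwards [hT, hBCall] with ω h1 h2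
  intro l
  -- deterministic key inequality
  have hkey : ∀ N, ∑ n ∈ Finset.range N, z l n ω
      ≤ c l * ∑ n ∈ Finset.range N, T n ω + Q l N ω := by
    intro N
    induction N with
    | zero => simp [hQ0]
    | succ N ih =>
      rw [Finset.sum_range_succ, Finset.sum_range_succ, hQrec]
      have : Q l N ω + z l N ω - c l * T N ω ≤ max (Q l N ω + z l N ω - c l * T N ω) 0 :=
        le_max_left _ _
      linarith
  have hTsum : ∀ N : ℕ, (N : ℝ) ≤ ∑ n ∈ Finset.range N, T n ω := by
    intro N
    calc (N : ℝ) = ∑ _n ∈ Finset.range N, (1 : ℝ) := by simp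
      _ ≤ ∑ n ∈ Finset.range N, T n ω := Finset.sum_le_sum fun n _ => h1 n
  -- limsup bound for each k
  have hstep : ∀ k : ℕ,
      limsup (fun N : ℕ =>
          (((∑ n ∈ Finset.range N, z l n ω) / (∑ n ∈ Finset.range N, T n ω) : ℝ) : EReal))
        atTop ≤ ((c l + 1 / (k + 1 : ℝ) : ℝ) : EReal) := by
    intro k
    set ε : ℝ := 1 / (k + 1 : ℝ) with hε
    have hεpos : 0 < ε := by positivity
    apply Filter.limsup_le_of_le
    · isBoundedDefault
    · filter_upwards [h2 k, Filter.eventually_ge_atTop 1] with N hN hN1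
      push_neg at hN
      have hNpos : (0 : ℝ) < N := by exact_mod_cast hN1
      have hTpos : (0 : ℝ) < ∑ n ∈ Finset.range N, T n ω := lt_of_lt_of_le hNpos (hTsum N)
      have hQb : Q l N ω ≤ ε * N := le_of_lt (lt_of_le_of_lt (hQleNQ l N ω) hN)
      have hzb : ∑ n ∈ Finset.range N, z l n ω
          ≤ (c l + ε) * ∑ n ∈ Finset.range N, T n ω := by
        have hεN : ε * (N : ℝ) ≤ ε * ∑ n ∈ Finset.range N, T n ω :=
          mul_le_mul_of_nonneg_left (hTsum N) hεpos.le
        have := hkey N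
        nlinarith
      have hdiv : (∑ n ∈ Finset.range N, z l n ω) / (∑ n ∈ Finset.range N, T n ω)
          ≤ c l + ε := (div_le_iff₀ hTpos).mpr hzb
      exact_mod_cast EReal.coe_le_coe_iff.mpr hdiv
  -- conclude
  by_contra hcon
  push_neg at hcon
  obtain ⟨x, hx1, hx2⟩ := EReal.lt_iff_exists_real_btwn.mp hcon
  have hx1' : c l < x := by exact_mod_cast hx1
  obtain ⟨k, hk⟩ := exists_nat_one_div_lt (sub_pos.mpr hx1')
  have : ((x : ℝ) : EReal) ≤ ((c l + 1 / (k + 1 : ℝ) : ℝ) : EReal) := le_trans hx2.le (hstep k)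
  have hxle : x ≤ c l + 1 / (k + 1 : ℝ) := by exact_mod_cast this
  linarith
end

section
/- Let (Ω, F, P) be a probability space with filtration {H_n}_{n≥m} indexed by integers n ≥ m, let {F[n]}_{n≥m} be a real-valued process adapted to {H_n} with F[m] = 0, and let τ be a stopping time with respect to {H_n} taking values in {m+1, m+2, …} ∪ {∞}. Let d > 0 and let (b_n)_{n≥m+1} be a nondecreasing sequence of positive reals with d ≤ b_{m+1}. Define λ_n = d/(2e·b_n²) and ρ_n = 1 − d²/(4e·b_n²) for n ≥ m+1 (so each ρ_n ∈ (0,1) and λ_n is nonincreasing). Suppose for every n ≥ m: (i) |F[n+1] − F[n]| ≤ b_{n+1} almost surely; and (ii) almost surely on the event {τ > n}: F[n] ≥ 0 and E[F[n+1] − F[n] | H_n] ≤ −d. Then the process G[n] = exp(λ_{n∧τ} · F[n∧τ]) / Π_{i=m+1}^{n∧τ} ρ_i, for n ≥ m+1, is a supermartingale with respect to {H_n}_{n≥m+1}. -/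
open MeasureTheory Filter

lemma exp_quad {x : ℝ} (hx : |x| ≤ 1) : Real.exp x ≤ 1 + x + x ^ 2 * (Real.exp 1 / 2) := by
  have h := Real.exp_bound hx (n := 2) (by norm_num)
  rw [Finset.sum_range_succ, Finset.sum_range_succ, Finset.sum_range_zero] at h
  have h2 : (2:ℝ) ≤ Real.exp 1 := by have := Real.add_one_le_exp 1; linarith
  have h3 := (abs_le.1 h).2
  have hsq : |x| ^ 2 = x ^ 2 := sq_abs x
  norm_num [Nat.factorial] at h3
  nlinarith [sq_nonneg x]

/-- Lemma 8 (exponential supermartingale), abstract form: an adapted process with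
uniformly negative conditional drift −d and increments bounded by a nondecreasing
sequence b_n, killed at a stopping time τ before which it stays nonnegative, yields a
supermartingale after exponential reweighting with time-varying exponents λ_n = d/(2e b_n²)
and weights ρ_n = 1 − d²/(4e b_n²). -/
theorem stmt_13 {Ω : Type*} {m0 : MeasurableSpace Ω} (μ : Measure Ω) [IsProbabilityMeasure μ]
    (ℱ : Filtration ℕ m0) (m : ℕ) (F : ℕ → Ω → ℝ)
    (hFadapted : ∀ n, m ≤ n → StronglyMeasurable[ℱ n] (F n))
    (hFm : ∀ ω, F m ω = 0)
    (τ : Ω → ℕ∞)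
    (hτstop : ∀ n : ℕ, MeasurableSet[ℱ n] {ω | τ ω ≤ (n : ℕ∞)})
    (hτval : ∀ ω, ((m : ℕ∞) + 1) ≤ τ ω)
    (d : ℝ) (hd : 0 < d)
    (b : ℕ → ℝ) (hbpos : ∀ n, m + 1 ≤ n → 0 < b n)
    (hbmono : ∀ i j, m + 1 ≤ i → i ≤ j → b i ≤ b j)
    (hdb : d ≤ b (m + 1))
    (lam ρ : ℕ → ℝ)
    (hlam : ∀ n, m + 1 ≤ n → lam n = d / (2 * Real.exp 1 * (b n) ^ 2))
    (hρ : ∀ n, m + 1 ≤ n → ρ n = 1 - d ^ 2 / (4 * Real.exp 1 * (b n) ^ 2))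
    (hinc : ∀ n, m ≤ n → ∀ᵐ ω ∂μ, |F (n + 1) ω - F n ω| ≤ b (n + 1))
    (hdrift : ∀ n, m ≤ n → ∀ᵐ ω ∂μ, ((n : ℕ∞) < τ ω) →
      0 ≤ F n ω ∧ (μ[fun ω' => F (n + 1) ω' - F n ω' | ℱ n]) ω ≤ -d)
    (G : ℕ → Ω → ℝ)
    (hG : ∀ n ω, G n ω =
      Real.exp (lam ((min (n : ℕ∞) (τ ω)).toNat) * F ((min (n : ℕ∞) (τ ω)).toNat) ω) /
        ∏ i ∈ Finset.Icc (m + 1) ((min (n : ℕ∞) (τ ω)).toNat), ρ i) :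
    ∀ n, m + 1 ≤ n →
      Integrable (G n) μ ∧ StronglyMeasurable[ℱ n] (G n) ∧
        (μ[G (n + 1) | ℱ n]) ≤ᵐ[μ] G n := by
  have hle : ∀ k, (ℱ k : MeasurableSpace Ω) ≤ m0 := fun k => ℱ.le k
  have hSMdiv : ∀ {ms : MeasurableSpace Ω} {f : Ω → ℝ},
      StronglyMeasurable[ms] f → ∀ c : ℝ, StronglyMeasurable[ms] (fun ω => f ω / c) := by
    intro ms f hf c
    simpa [div_eq_mul_inv] using hf.mul_const c⁻¹
  have hE : (2:ℝ) ≤ Real.exp 1 := by have := Real.add_one_le_exp 1; linarith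
  have hEpos : (0:ℝ) < Real.exp 1 := Real.exp_pos 1
  set P : ℕ → ℝ := fun k => ∏ i ∈ Finset.Icc (m + 1) k, ρ i with hPdef
  -- basic facts
  have hbk : ∀ k, m + 1 ≤ k → d ≤ b k := fun k hk => hdb.trans (hbmono _ _ le_rfl hk)
  have hlampos : ∀ k, m + 1 ≤ k → 0 < lam k := by
    intro k hk; rw [hlam k hk]; have := hbpos k hk; positivity
  have hlammono : ∀ j k, m + 1 ≤ j → j ≤ k → lam k ≤ lam j := by
    intro j k hj hjk
    rw [hlam j hj, hlam k (hj.trans hjk)]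
    have hbj := hbpos j hj
    have hbjk : b j ≤ b k := hbmono _ _ hj hjk
    gcongr
  have hlamb : ∀ k, m + 1 ≤ k → lam k * b k ≤ 1 := by
    intro k hk
    rw [hlam k hk]
    have hb := hbpos k hk
    have hdk := hbk k hk
    rw [div_mul_eq_mul_div, div_le_one (by positivity)]
    nlinarith
  have hρhalf : ∀ k, m + 1 ≤ k → (1:ℝ)/2 ≤ ρ k := by
    intro k hk
    rw [hρ k hk]
    have hb := hbpos k hk
    have hdk := hbk k hk
    have : d ^ 2 / (4 * Real.exp 1 * b k ^ 2) ≤ 1/2 := by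
      rw [div_le_iff₀ (by positivity)]
      nlinarith
    linarith
  have hρpos : ∀ k, m + 1 ≤ k → (0:ℝ) < ρ k := fun k hk => lt_of_lt_of_le (by norm_num) (hρhalf k hk)
  have hPpos : ∀ k, 0 < P k := by
    intro k
    refine Finset.prod_pos fun i hi => hρpos i (Finset.mem_Icc.1 hi).1
  have hPsucc : ∀ k, m ≤ k → P (k + 1) = P k * ρ (k + 1) := by
    intro k hk
    exact Finset.prod_Icc_succ_top (by omega) ρ
  -- a.e. increment bounds, all k at once
  have hincs : ∀ᵐ ω ∂μ, ∀ k, m ≤ k → |F (k + 1) ω - F k ω| ≤ b (k + 1) := by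
    rw [ae_all_iff]
    intro k
    by_cases hk : m ≤ k
    · filter_upwards [hinc k hk] with ω h using fun _ => h
    · filter_upwards with ω h
      exact absurd h hk
  have hFb : ∀ ω, (∀ k, m ≤ k → |F (k + 1) ω - F k ω| ≤ b (k + 1)) →
      ∀ k, m ≤ k → |F k ω| ≤ ∑ i ∈ Finset.Icc (m + 1) k, b i := by
    intro ω hω k hk
    induction k, hk using Nat.le_induction with
    | base => simp [hFm ω, show Finset.Icc (m + 1) m = ∅ from Finset.Icc_eq_empty (by omega)]
    | succ k hk ih =>
      have h1 := hω k hk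
      have h2 : |F (k + 1) ω| ≤ |F k ω| + b (k + 1) := by
        calc |F (k + 1) ω| = |F k ω + (F (k + 1) ω - F k ω)| := by ring_nf
          _ ≤ |F k ω| + |F (k + 1) ω - F k ω| := abs_add_le _ _
          _ ≤ |F k ω| + b (k + 1) := by linarith
      rw [Finset.sum_Icc_succ_top (by omega)]
      linarith
  -- integrability of exponential functions of F
  have hexpFint : ∀ k, m ≤ k → ∀ r : ℝ, 0 ≤ r →
      Integrable (fun ω => Real.exp (r * F k ω)) μ := by
    intro k hk r hr
    set B := ∑ i ∈ Finset.Icc (m + 1) k, b i with hB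
    refine Integrable.mono' (integrable_const (Real.exp (r * B)))
      ((Real.continuous_exp.comp_stronglyMeasurable
        (((hFadapted k hk).mono (hle k)).const_mul r)).aestronglyMeasurable) ?_
    filter_upwards [hincs] with ω hω
    have h1 : F k ω ≤ B := le_trans (le_abs_self _) (hFb ω hω k hk)
    rw [Real.norm_eq_abs, abs_of_nonneg (Real.exp_pos _).le, Real.exp_le_exp]
    exact mul_le_mul_of_nonneg_left h1 hr
  -- the recursion formula
  have hGrec : ∀ N ω, G (N + 1) ω =
      if ((N : ℕ∞) < τ ω) then Real.exp (lam (N + 1) * F (N + 1) ω) / P (N + 1) else G N ω := by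
    intro N ω
    by_cases h : (N : ℕ∞) < τ ω
    · rw [if_pos h, hG]
      have h1 : min ((N + 1 : ℕ) : ℕ∞) (τ ω) = ((N + 1 : ℕ) : ℕ∞) := by
        apply min_eq_left
        have h2 : (N : ℕ∞) + 1 ≤ τ ω := (ENat.add_one_le_iff (by simp)).2 h
        push_cast
        exact h2
      rw [h1, ENat.toNat_coe]
    · rw [if_neg h, hG, hG]
      have hτn : τ ω ≤ (N : ℕ∞) := not_lt.1 h
      have h1 : min ((N + 1 : ℕ) : ℕ∞) (τ ω) = τ ω :=
        min_eq_right (hτn.trans (by exact_mod_cast Nat.cast_le.2 (Nat.le_succ N)))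
      have h2 : min ((N : ℕ∞)) (τ ω) = τ ω := min_eq_right hτn
      rw [h1, h2]
  -- value of G at m+1
  have hGbase : ∀ ω, G (m + 1) ω = Real.exp (lam (m + 1) * F (m + 1) ω) / P (m + 1) := by
    intro ω
    rw [hG]
    have h1 : min ((m + 1 : ℕ) : ℕ∞) (τ ω) = ((m + 1 : ℕ) : ℕ∞) := by
      apply min_eq_left
      have := hτval ω
      push_cast
      exact this
    rw [h1, ENat.toNat_coe]
  -- S sets
  have hSmeas : ∀ N : ℕ, MeasurableSet[ℱ N] {ω | (N : ℕ∞) < τ ω} := by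
    intro N
    have : {ω | (N : ℕ∞) < τ ω} = {ω | τ ω ≤ (N : ℕ∞)}ᶜ := by
      ext ω; simp [not_le]
    rw [this]
    exact (hτstop N).compl
  -- integrability and measurability of G, by induction
  have hmain : ∀ N, m + 1 ≤ N → Integrable (G N) μ ∧ StronglyMeasurable[ℱ N] (G N) := by
    intro N hN
    induction N, hN using Nat.le_induction with
    | base =>
      have heq : G (m + 1) = fun ω => Real.exp (lam (m + 1) * F (m + 1) ω) / P (m + 1) :=
        funext hGbase
      constructor
      · rw [heq]
        exact (hexpFint (m + 1) (by omega) (lam (m + 1)) (hlampos _ le_rfl).le).div_const _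
      · rw [heq]
        exact hSMdiv (Real.continuous_exp.comp_stronglyMeasurable
          ((hFadapted (m + 1) (by omega)).const_mul _)) _
    | succ N hN ih =>
      set S := {ω | (N : ℕ∞) < τ ω} with hSdef
      have heq : G (N + 1) = S.indicator (fun ω => Real.exp (lam (N + 1) * F (N + 1) ω) / P (N + 1))
          + Sᶜ.indicator (G N) := by
        funext ω
        rw [hGrec N ω]
        by_cases h : (N : ℕ∞) < τ ω
        · rw [if_pos h, Pi.add_apply, Set.indicator_of_mem (show ω ∈ S from h),
            Set.indicator_of_notMem (show ω ∉ Sᶜ from fun hc => hc h), add_zero]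
        · rw [if_neg h, Pi.add_apply, Set.indicator_of_notMem (show ω ∉ S from h),
            Set.indicator_of_mem (show ω ∈ Sᶜ from h), zero_add]
      have hexpi : Integrable (fun ω => Real.exp (lam (N + 1) * F (N + 1) ω) / P (N + 1)) μ :=
        (hexpFint (N + 1) (by omega) (lam (N + 1)) (hlampos _ (by omega)).le).div_const _
      have hexpm : StronglyMeasurable[ℱ (N + 1)] (fun ω => Real.exp (lam (N + 1) * F (N + 1) ω) / P (N + 1)) :=
        hSMdiv (Real.continuous_exp.comp_stronglyMeasurable
          ((hFadapted (N + 1) (by omega)).const_mul _)) _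
      constructor
      · rw [heq]
        exact (hexpi.indicator (hle N _ (hSmeas N))).add
          (ih.1.indicator (hle N _ (hSmeas N).compl))
      · rw [heq]
        exact (hexpm.indicator ((ℱ.mono (Nat.le_succ N)) _ (hSmeas N))).add
          ((ih.2.mono (ℱ.mono (Nat.le_succ N))).indicator
            ((ℱ.mono (Nat.le_succ N)) _ (hSmeas N).compl))
  -- main supermartingale inequality
  intro n hn
  refine ⟨(hmain n hn).1, (hmain n hn).2, ?_⟩
  set S := {ω | (n : ℕ∞) < τ ω} with hSdef
  obtain ⟨lam', hlam'def⟩ : ∃ x : ℝ, x = lam (n + 1) := ⟨_, rfl⟩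
  obtain ⟨c, hcdef⟩ : ∃ x : ℝ, x = lam' ^ 2 * b (n + 1) ^ 2 * (Real.exp 1 / 2) := ⟨_, rfl⟩
  obtain ⟨X, hXdef⟩ : ∃ X : Ω → ℝ, X = fun ω => F (n + 1) ω - F n ω := ⟨_, rfl⟩
  have hXω : ∀ ω, X ω = F (n + 1) ω - F n ω := fun ω => by rw [hXdef]
  have hCE : μ[X|ℱ n] = μ[fun ω' => F (n + 1) ω' - F n ω'|ℱ n] := by rw [hXdef]
  have hn1 : m + 1 ≤ n + 1 := by omega
  have hmn : m ≤ n := by omega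
  have hlam'pos : 0 < lam' := hlam'def ▸ hlampos _ hn1
  have hXmeas : StronglyMeasurable (X) := by
    rw [hXdef]
    exact (((hFadapted (n + 1) (by omega)).mono (hle _)).sub ((hFadapted n hmn).mono (hle _)))
  have hXint : Integrable X μ := by
    refine Integrable.mono' (integrable_const (b (n + 1))) hXmeas.aestronglyMeasurable ?_
    filter_upwards [hinc n hmn] with ω h
    rw [Real.norm_eq_abs, hXω]
    exact h
  have hEexpint : Integrable (fun ω => Real.exp (lam' * X ω)) μ := by
    refine Integrable.mono' (integrable_const (Real.exp (lam' * b (n + 1))))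
      ((Real.continuous_exp.comp_stronglyMeasurable (hXmeas.const_mul _)).aestronglyMeasurable) ?_
    filter_upwards [hinc n hmn] with ω h
    rw [Real.norm_eq_abs, abs_of_nonneg (Real.exp_pos _).le, Real.exp_le_exp, hXω]
    exact mul_le_mul_of_nonneg_left (le_trans (le_abs_self _) h) hlam'pos.le
  -- Step A: pointwise quadratic bound
  have hstepA : ∀ᵐ ω ∂μ, Real.exp (lam' * X ω) ≤ (1 + c) + lam' * X ω := by
    filter_upwards [hinc n hmn] with ω h0
    have h : |X ω| ≤ b (n + 1) := by rw [hXω]; exact h0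
    have habs : |lam' * X ω| ≤ 1 := by
      rw [abs_mul, abs_of_nonneg hlam'pos.le]
      calc lam' * |X ω| ≤ lam' * b (n + 1) := mul_le_mul_of_nonneg_left h hlam'pos.le
        _ ≤ 1 := by rw [hlam'def]; exact hlamb _ hn1
    have := exp_quad habs
    have hX2 : (lam' * X ω) ^ 2 ≤ lam' ^ 2 * b (n + 1) ^ 2 := by
      rw [mul_pow]
      have : X ω ^ 2 ≤ b (n + 1) ^ 2 := sq_le_sq' (by linarith [(abs_le.1 h).1]) (by linarith [(abs_le.1 h).2])
      exact mul_le_mul_of_nonneg_left this (sq_nonneg _)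
    have hc2 : (lam' * X ω) ^ 2 * (Real.exp 1 / 2) ≤ c := by
      rw [hcdef]
      exact mul_le_mul_of_nonneg_right hX2 (by positivity)
    linarith
  -- Step B: conditional expectation bound
  have hrhsint : Integrable (fun ω => (1 + c) + lam' * X ω) μ := by
    exact (integrable_const (1 + c)).add (hXint.const_mul lam')
  have hstepB : μ[fun ω => Real.exp (lam' * X ω)|ℱ n] ≤ᵐ[μ]
      μ[fun ω => (1 + c) + lam' * X ω|ℱ n] := condExp_mono hEexpint hrhsint hstepA
  have hcondrhs : μ[fun ω => (1 + c) + lam' * X ω|ℱ n] =ᵐ[μ]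
      fun ω => (1 + c) + lam' * (μ[X|ℱ n]) ω := by
    have heq : (fun ω => (1 + c) + lam' * X ω) = (fun _ => (1 + c)) + lam' • X := by
      funext ω; simp [smul_eq_mul]
    rw [heq]
    have h1 := condExp_add (μ := μ) (m := ℱ n) (integrable_const (1 + c)) (hXint.smul lam')
    have h2 := condExp_smul (μ := μ) (m := ℱ n) lam' X
    have h3 := condExp_const (μ := μ) (hle n) (1 + c)
    filter_upwards [h1, h2] with ω hω1 hω2
    rw [hω1]
    simp only [Pi.add_apply, h3, Pi.smul_apply, smul_eq_mul] at *
    rw [hω2]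
  -- numeric bound: (1+c) - lam' * d ≤ ρ (n+1)
  have hnum : (1 + c) + lam' * (-d) ≤ ρ (n + 1) := by
    rw [hρ _ hn1, hcdef, hlam'def, hlam _ hn1]
    have hb := hbpos _ hn1
    have e1 : (d / (2 * Real.exp 1 * b (n+1) ^ 2)) ^ 2 * b (n+1) ^ 2 * (Real.exp 1 / 2)
        = d ^ 2 / (8 * Real.exp 1 * b (n+1) ^ 2) := by
      field_simp
      ring
    have e2 : d / (2 * Real.exp 1 * b (n+1) ^ 2) * (-d)
        = -(d ^ 2 / (2 * Real.exp 1 * b (n+1) ^ 2)) := by ring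
    have e3 : d ^ 2 / (2 * Real.exp 1 * b (n+1) ^ 2)
        = d ^ 2 / (8 * Real.exp 1 * b (n+1) ^ 2) + d ^ 2 / (8 * Real.exp 1 * b (n+1) ^ 2)
          + d ^ 2 / (4 * Real.exp 1 * b (n+1) ^ 2) := by
      field_simp
      ring
    have e4 : 0 ≤ d ^ 2 / (8 * Real.exp 1 * b (n+1) ^ 2) := by positivity
    rw [e1, e2, e3]
    linarith
  -- Step C: pull-out
  have hfg_eq : (fun ω => Real.exp (lam' * F (n + 1) ω)) =
      (fun ω => Real.exp (lam' * F n ω)) * (fun ω => Real.exp (lam' * X ω)) := by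
    funext ω
    rw [Pi.mul_apply, ← Real.exp_add]
    congr 1
    simp [hXdef]; ring
  have hfmeas : StronglyMeasurable[ℱ n] (fun ω => Real.exp (lam' * F n ω)) :=
    Real.continuous_exp.comp_stronglyMeasurable ((hFadapted n hmn).const_mul _)
  have hfgint : Integrable ((fun ω => Real.exp (lam' * F n ω)) * (fun ω => Real.exp (lam' * X ω))) μ := by
    rw [← hfg_eq]
    exact hexpFint (n + 1) (by omega) lam' hlam'pos.le
  have hpull : μ[fun ω => Real.exp (lam' * F (n + 1) ω)|ℱ n] =ᵐ[μ]
      (fun ω => Real.exp (lam' * F n ω)) * μ[fun ω => Real.exp (lam' * X ω)|ℱ n] := by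
    rw [hfg_eq]
    exact condExp_mul_of_stronglyMeasurable_left hfmeas hfgint hEexpint
  -- decomposition of G (n+1)
  have hGdecomp : G (n + 1) = S.indicator (fun ω => Real.exp (lam' * F (n + 1) ω) / P (n + 1))
      + Sᶜ.indicator (G n) := by
    funext ω
    rw [hGrec n ω]
    by_cases h : (n : ℕ∞) < τ ω
    · rw [if_pos h, Pi.add_apply, Set.indicator_of_mem (show ω ∈ S from h),
        Set.indicator_of_notMem (show ω ∉ Sᶜ from fun hc => hc h), add_zero, hlam'def]
    · rw [if_neg h, Pi.add_apply, Set.indicator_of_notMem (show ω ∉ S from h),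
        Set.indicator_of_mem (show ω ∈ Sᶜ from h), zero_add]
  have hexpi1 : Integrable (fun ω => Real.exp (lam' * F (n + 1) ω) / P (n + 1)) μ :=
    (hexpFint (n + 1) (by omega) lam' hlam'pos.le).div_const _
  have hind1int : Integrable (S.indicator (fun ω => Real.exp (lam' * F (n + 1) ω) / P (n + 1))) μ :=
    hexpi1.indicator (hle n _ (hSmeas n))
  have hind2int : Integrable (Sᶜ.indicator (G n)) μ :=
    (hmain n hn).1.indicator (hle n _ (hSmeas n).compl)
  have hcondsplit : μ[G (n + 1)|ℱ n] =ᵐ[μ]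
      μ[S.indicator (fun ω => Real.exp (lam' * F (n + 1) ω) / P (n + 1))|ℱ n]
      + μ[Sᶜ.indicator (G n)|ℱ n] := by
    rw [hGdecomp]
    exact condExp_add hind1int hind2int _
  have hI2 : μ[Sᶜ.indicator (G n)|ℱ n] = Sᶜ.indicator (G n) :=
    condExp_of_stronglyMeasurable (hle n) ((hmain n hn).2.indicator (hSmeas n).compl) hind2int
  -- indicator as product
  have hind1_eq : S.indicator (fun ω => Real.exp (lam' * F (n + 1) ω) / P (n + 1)) =
      (S.indicator (fun _ => (1:ℝ))) * (fun ω => Real.exp (lam' * F (n + 1) ω) / P (n + 1)) := by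
    funext ω
    by_cases h : ω ∈ S
    · simp [Set.indicator_of_mem h]
    · simp [Set.indicator_of_notMem h]
  have hI1 : μ[S.indicator (fun ω => Real.exp (lam' * F (n + 1) ω) / P (n + 1))|ℱ n] =ᵐ[μ]
      (S.indicator (fun _ => (1:ℝ))) * μ[fun ω => Real.exp (lam' * F (n + 1) ω) / P (n + 1)|ℱ n] := by
    rw [hind1_eq]
    exact condExp_mul_of_stronglyMeasurable_left (stronglyMeasurable_const.indicator (hSmeas n))
      (by rw [← hind1_eq]; exact hind1int) hexpi1
  have hdivP : μ[fun ω => Real.exp (lam' * F (n + 1) ω) / P (n + 1)|ℱ n] =ᵐ[μ]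
      fun ω => (μ[fun ω' => Real.exp (lam' * F (n + 1) ω')|ℱ n]) ω / P (n + 1) := by
    have heq : (fun ω => Real.exp (lam' * F (n + 1) ω) / P (n + 1)) =
        (P (n + 1))⁻¹ • (fun ω => Real.exp (lam' * F (n + 1) ω)) := by
      funext ω; simp [smul_eq_mul, div_eq_inv_mul]
    rw [heq]
    filter_upwards [condExp_smul (μ := μ) (m := ℱ n) (P (n + 1))⁻¹
      (fun ω => Real.exp (lam' * F (n + 1) ω))] with ω hω
    rw [hω]
    simp [smul_eq_mul, div_eq_inv_mul]
  -- put it all together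
  have hρn1 : 0 < ρ (n + 1) := hρpos _ hn1
  have hPn : 0 < P n := hPpos n
  have hPn1 : P (n + 1) = P n * ρ (n + 1) := hPsucc n hmn
  filter_upwards [hcondsplit, hI1, hdivP, hpull, hstepB, hcondrhs, hdrift n hmn] with ω h1 h2 h3 h4 h5 h6 hdft
  rw [h1, Pi.add_apply, hI2, h2]
  by_cases h : ω ∈ S
  · have hd1 := hdft h
    rw [Set.indicator_of_notMem (show ω ∉ Sᶜ from fun hc => hc h), add_zero, Pi.mul_apply,
      Set.indicator_of_mem h, one_mul, h3]
    -- G n ω on S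
    have hGn : G n ω = Real.exp (lam n * F n ω) / P n := by
      rw [hG]
      have : min ((n : ℕ∞)) (τ ω) = (n : ℕ∞) := min_eq_left (le_of_lt h)
      rw [this, ENat.toNat_coe]
    rw [hGn]
    -- bound on condexp of exp at ω
    have hKbound : (μ[fun ω' => Real.exp (lam' * F (n + 1) ω')|ℱ n]) ω ≤
        Real.exp (lam' * F n ω) * ρ (n + 1) := by
      rw [h4, Pi.mul_apply]
      have hKle : (μ[fun ω' => Real.exp (lam' * X ω')|ℱ n]) ω ≤ ρ (n + 1) := by
        refine le_trans (le_trans h5 (le_of_eq h6)) ?_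
        have hle2 : (μ[X|ℱ n]) ω ≤ -d := by rw [hCE]; exact hd1.2
        have hmul : lam' * (μ[X|ℱ n]) ω ≤ lam' * (-d) :=
          mul_le_mul_of_nonneg_left hle2 hlam'pos.le
        linarith [hnum]
      exact mul_le_mul_of_nonneg_left hKle (Real.exp_pos _).le
    calc (μ[fun ω' => Real.exp (lam' * F (n + 1) ω')|ℱ n]) ω / P (n + 1)
        ≤ Real.exp (lam' * F n ω) * ρ (n + 1) / P (n + 1) := by
          exact div_le_div_of_nonneg_right hKbound (le_of_lt (by rw [hPn1]; positivity))
      _ = Real.exp (lam' * F n ω) / P n := by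
          rw [hPn1]; field_simp
      _ ≤ Real.exp (lam n * F n ω) / P n := by
          have hFn0 := hd1.1
          have : lam' * F n ω ≤ lam n * F n ω := by
            have hmono := hlammono n (n + 1) hn (Nat.le_succ n)
            rw [hlam'def]
            exact mul_le_mul_of_nonneg_right hmono hFn0
          exact div_le_div_of_nonneg_right (Real.exp_le_exp.2 this) hPn.le
  · rw [Set.indicator_of_mem (show ω ∈ Sᶜ from h), Pi.mul_apply,
      Set.indicator_of_notMem h, zero_mul, zero_add]
end

section
/- For every β ∈ (0, 1/5] and every C₁ > 0 there exists a constant C > 0 (depending only on β and C₁) such that for all integers n ≥ 1: Σ_{m=1}^∞ (m+1)³ · exp( −((n+m+1)^{1−β} − (n+2)^{1−β}) / (C₁·(1−β)) ) ≤ C·(n+2)^{5β}. -/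
open Real

lemma aux_chord {p t : ℝ} (hp0 : 0 < p) (hp1 : p ≤ 1) (ht0 : 0 ≤ t) (ht1 : t ≤ 1) :
    1 + (2 ^ p - 1) * t ≤ (1 + t) ^ p := by
  have h := (Real.concaveOn_rpow hp0.le hp1).2
    (by simp : (1:ℝ) ∈ Set.Ici (0:ℝ)) (by norm_num : (2:ℝ) ∈ Set.Ici (0:ℝ))
    (by linarith : (0:ℝ) ≤ 1 - t) ht0 (by ring)
  simp only [smul_eq_mul, Real.one_rpow] at h
  have e : (1 - t) * 1 + t * 2 = 1 + t := by ring
  rw [e] at h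
  nlinarith [h]

lemma aux_cube {t : ℝ} (ht : 0 ≤ t) : t ^ 3 ≤ 27 * Real.exp t := by
  have h : t / 3 ≤ Real.exp (t / 3) := by linarith [Real.add_one_le_exp (t/3)]
  have h2 : (t / 3) ^ 3 ≤ Real.exp (t / 3) ^ 3 := pow_le_pow_left₀ (by positivity) h 3
  have h3 : Real.exp (t / 3) ^ 3 = Real.exp t := by
    rw [← Real.exp_nat_mul]; congr 1; ring
  nlinarith [h2, h3]

lemma aux_eight {u : ℝ} (hu : 0 < u) : Real.exp (-u) ≤ 8 ^ 8 * (u⁻¹) ^ 8 := by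
  have h : u / 8 ≤ Real.exp (u / 8) := by linarith [Real.add_one_le_exp (u/8)]
  have h2 : (u / 8) ^ 8 ≤ Real.exp (u / 8) ^ 8 := pow_le_pow_left₀ (by positivity) h 8
  have h3 : Real.exp (u / 8) ^ 8 = Real.exp u := by
    rw [← Real.exp_nat_mul]; congr 1; ring
  have h4 : u ^ 8 ≤ 8 ^ 8 * Real.exp u := by
    rw [← h3]; rw [div_pow] at h2; nlinarith [h2]
  have hue : 0 < Real.exp u := Real.exp_pos u
  have hu8 : (0:ℝ) < u ^ 8 := by positivity
  rw [Real.exp_neg, inv_pow, ← one_div, ← one_div, mul_one_div, div_le_div_iff₀ hue hu8]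
  nlinarith [h4]

lemma aux_sqrt2 : (7/5 : ℝ) ≤ (2:ℝ) ^ ((1:ℝ)/2) := by
  rw [← Real.sqrt_eq_rpow]
  rw [show (7/5:ℝ) = Real.sqrt ((7/5)^2) by rw [Real.sqrt_sq]; norm_num]
  apply Real.sqrt_le_sqrt; norm_num

lemma aux_base_summable : Summable (fun m : ℕ => ((m:ℝ)+1) ^ (-(17/5) : ℝ)) := by
  have h1 : Summable (fun m : ℕ => ((m:ℝ)) ^ (-(17/5) : ℝ)) :=
    Real.summable_nat_rpow.mpr (by norm_num)
  have h2 := (summable_nat_add_iff 1).mpr h1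
  exact h2.congr (fun m => by push_cast; norm_num)

lemma aux_h2_summable {p c : ℝ} (hp : 4/5 ≤ p) (hc : 0 < c) :
    Summable (fun m : ℕ => ((m:ℝ)+2)^3 * Real.exp (-(c * (m:ℝ)^p))) := by
  set D : ℝ := 16 * 27 * 8^8 * (c⁻¹)^8 + 8 with hD
  have hD0 : 0 < D := by positivity
  refine Summable.of_nonneg_of_le (fun m => ?_) (fun m => ?_)
    (aux_base_summable.mul_left D)
  · positivity
  · rcases Nat.eq_zero_or_pos m with rfl | hm
    · simp only [Nat.cast_zero]
      rw [Real.zero_rpow (by linarith : p ≠ 0)]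
      rw [hD]; norm_num [Real.exp_zero]
      positivity
    · set M : ℝ := (m:ℝ) with hMdef
      have hM1 : (1:ℝ) ≤ M := by rw [hMdef]; exact_mod_cast hm
      have hM0 : (0:ℝ) < M := by linarith
      have hq : (0:ℝ) < M ^ p := Real.rpow_pos_of_pos hM0 p
      have s1 : (M+2)^3 ≤ 27 * M^3 := by nlinarith [sq_nonneg M, sq_nonneg (M-1)]
      have s2 : Real.exp (-(c * M^p)) ≤ 8^8 * ((c * M^p)⁻¹)^8 :=
        aux_eight (by positivity)
      have s3 : ((c * M^p)⁻¹)^8 = (c⁻¹)^8 * ((M^p)⁻¹)^8 := by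
        rw [mul_inv, mul_pow]
      have s4 : M^3 * ((M^p)⁻¹)^8 = M ^ ((3:ℝ) - p*8) := by
        rw [← Real.rpow_neg hM0.le, ← Real.rpow_natCast (M ^ (-p)) 8,
          ← Real.rpow_mul hM0.le, ← Real.rpow_natCast M 3, ← Real.rpow_add hM0]
        push_cast
        ring_nf
      have s5 : M ^ ((3:ℝ) - p*8) ≤ M ^ (-(17/5) : ℝ) :=
        Real.rpow_le_rpow_of_exponent_le hM1 (by linarith)
      have s6 : M ^ (-(17/5) : ℝ) ≤ 16 * (M+1) ^ (-(17/5) : ℝ) := by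
        have hA : (0:ℝ) < M ^ ((17/5) : ℝ) := Real.rpow_pos_of_pos hM0 _
        have hB : (0:ℝ) < (M+1) ^ ((17/5) : ℝ) := Real.rpow_pos_of_pos (by linarith) _
        have hBA : (M+1) ^ ((17/5) : ℝ) ≤ 16 * M ^ ((17/5) : ℝ) := by
          have h1 : (M+1) ^ ((17/5) : ℝ) ≤ (2*M) ^ ((17/5) : ℝ) :=
            Real.rpow_le_rpow (by linarith) (by linarith) (by norm_num)
          have h2 : (2*M) ^ ((17/5) : ℝ) = 2 ^ ((17/5) : ℝ) * M ^ ((17/5) : ℝ) :=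
            Real.mul_rpow (by norm_num) hM0.le
          have h3 : (2:ℝ) ^ ((17/5) : ℝ) ≤ 16 := by
            have h5 : (2:ℝ) ^ ((17/5) : ℝ) ≤ 2 ^ (((4:ℕ)):ℝ) :=
              Real.rpow_le_rpow_of_exponent_le (by norm_num) (by push_cast; norm_num)
            rwa [Real.rpow_natCast, (by norm_num : (2:ℝ)^(4:ℕ) = 16)] at h5
          calc (M+1) ^ ((17/5) : ℝ) ≤ (2*M) ^ ((17/5) : ℝ) := h1
            _ = 2 ^ ((17/5) : ℝ) * M ^ ((17/5) : ℝ) := h2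
            _ ≤ 16 * M ^ ((17/5) : ℝ) :=
                mul_le_mul_of_nonneg_right h3 (Real.rpow_nonneg hM0.le _)
        rw [Real.rpow_neg hM0.le, Real.rpow_neg (by linarith : (0:ℝ) ≤ M+1),
          ← one_div, ← one_div, mul_one_div, div_le_div_iff₀ hA hB]
        nlinarith
      calc (M+2)^3 * Real.exp (-(c * M^p))
          ≤ (27 * M^3) * (8^8 * ((c * M^p)⁻¹)^8) := by
            apply mul_le_mul s1 s2 (Real.exp_nonneg _) (by positivity)
        _ = (27 * 8^8 * (c⁻¹)^8) * (M^3 * ((M^p)⁻¹)^8) := by rw [s3]; ring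
        _ = (27 * 8^8 * (c⁻¹)^8) * M ^ ((3:ℝ) - p*8) := by rw [s4]
        _ ≤ (27 * 8^8 * (c⁻¹)^8) * (16 * (M+1) ^ (-(17/5) : ℝ)) := by
            apply mul_le_mul_of_nonneg_left (le_trans s5 s6) (by positivity)
        _ = (16 * 27 * 8^8 * (c⁻¹)^8) * ((M+1) ^ (-(17/5) : ℝ)) := by ring
        _ ≤ D * ((M:ℝ)+1) ^ (-(17/5) : ℝ) := by
            have h9 : (0:ℝ) ≤ (M+1) ^ (-(17/5) : ℝ) := Real.rpow_nonneg (by linarith) _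
            exact mul_le_mul_of_nonneg_right (by rw [hD]; linarith) h9

set_option maxHeartbeats 2000000 in
/-- Appendix asymptotic estimate: for β ∈ (0,1/5] and C₁ > 0 there is C > 0 with
Σ_{m≥1} (m+1)³ exp(−((n+m+1)^{1−β} − (n+2)^{1−β})/(C₁(1−β))) ≤ C(n+2)^{5β} for all n ≥ 1.
(The series over integers m ≥ 1 is reindexed by m ↦ m+1 over ℕ.) -/
theorem stmt_15 (β C₁ : ℝ) (hβ0 : 0 < β) (hβ1 : β ≤ 1 / 5) (hC₁ : 0 < C₁) :
    ∃ C : ℝ, 0 < C ∧ ∀ n : ℕ, 1 ≤ n →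
      (∑' m : ℕ, ((m : ℝ) + 2) ^ 3 *
          Real.exp (-((((n : ℝ) + (m : ℝ) + 2) ^ (1 - β) - ((n : ℝ) + 2) ^ (1 - β)) /
            (C₁ * (1 - β))))) ≤
        C * ((n : ℝ) + 2) ^ (5 * β) := by
  have hβ1' : β < 1 := lt_of_le_of_lt hβ1 (by norm_num)
  set p : ℝ := 1 - β with hpdef
  have hp0 : 0 < p := by rw [hpdef]; linarith
  have hp1 : p ≤ 1 := by rw [hpdef]; linarith
  have hp45 : 4/5 ≤ p := by rw [hpdef]; linarith
  set c₂ : ℝ := 1/(4*C₁) with hc₂def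
  have hc₂0 : 0 < c₂ := by rw [hc₂def]; positivity
  set lam0 : ℝ := 2/(5*C₁) with hlam0def
  have hlam00 : 0 < lam0 := by rw [hlam0def]; positivity
  set h2 : ℕ → ℝ := fun m => ((m:ℝ)+2)^3 * Real.exp (-(c₂ * (m:ℝ)^p)) with hh2def
  have hsum2 : Summable h2 := aux_h2_summable hp45 hc₂0
  set T : ℝ := ∑' m, h2 m with hTdef
  have hT0 : 0 ≤ T := tsum_nonneg (fun m => by rw [hh2def]; positivity)
  set K : ℝ := 216 * Real.exp (2*lam0) * (lam0 + 2) * (lam0⁻¹)^4 with hKdef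
  have hK0 : 0 < K := by rw [hKdef]; positivity
  refine ⟨K + T + 1, by positivity, ?_⟩
  intro n hn
  set x : ℝ := (n:ℝ) + 2 with hxdef
  have hn1 : (1:ℝ) ≤ (n:ℝ) := by exact_mod_cast hn
  have hx3 : (3:ℝ) ≤ x := by rw [hxdef]; linarith
  have hx1 : (1:ℝ) ≤ x := by linarith
  have hx0 : (0:ℝ) < x := by linarith
  set w : ℝ := x ^ β with hwdef
  have hw1 : (1:ℝ) ≤ w := Real.one_le_rpow hx1 hβ0.le
  have hw0 : (0:ℝ) < w := by linarith
  set lam : ℝ := lam0 / w with hlamdef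
  have hlam0 : 0 < lam := by rw [hlamdef]; positivity
  have hlamle : lam ≤ lam0 := by
    rw [hlamdef]; exact div_le_self hlam00.le hw1
  set s : ℝ := Real.exp (-(lam/2)) with hsdef
  have hs0 : 0 < s := Real.exp_pos _
  have hs1 : s < 1 := by rw [hsdef]; exact Real.exp_lt_one_iff.mpr (by linarith)
  set B : ℝ := 216 * (lam⁻¹)^3 * Real.exp (2*lam) with hBdef
  have hB0 : 0 < B := by rw [hBdef]; positivity
  have hCp : 0 < C₁ * p := by positivity
  -- the key per-term bound
  have hkey : ∀ m : ℕ, ((m : ℝ) + 2) ^ 3 *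
      Real.exp (-((((n : ℝ) + (m : ℝ) + 2) ^ p - x ^ p) / (C₁ * p))) ≤ B * s^m + h2 m := by
    intro m
    set M : ℝ := (m:ℝ) with hMdef
    have hM0 : (0:ℝ) ≤ M := by rw [hMdef]; positivity
    have hxm : (n:ℝ) + (m:ℝ) + 2 = x + M := by rw [hxdef, hMdef]; ring
    rw [hxm]
    rcases le_or_gt M x with hcase | hcase
    · -- small m : exponent ≥ lam * M
      have hdiff : (2/5) * M * w⁻¹ ≤ (x+M)^p - x^p := by
        set t : ℝ := M / x with htdef
        have ht0 : 0 ≤ t := by rw [htdef]; positivity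
        have ht1 : t ≤ 1 := by rw [htdef]; exact (div_le_one hx0).mpr hcase
        have e2 : (x+M)^p = x^p * (1+t)^p := by
          have e1 : x + M = x * (1+t) := by rw [htdef]; field_simp
          rw [e1, Real.mul_rpow hx0.le (by linarith)]
        have chord := aux_chord hp0 hp1 ht0 ht1
        have h75 : (7:ℝ)/5 ≤ 2^p := by
          have h5 := Real.rpow_le_rpow_of_exponent_le (by norm_num : (1:ℝ) ≤ 2)
            (show (1:ℝ)/2 ≤ p by linarith)
          linarith [aux_sqrt2]
        have hxp0 : 0 < x^p := Real.rpow_pos_of_pos hx0 p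
        have c5 : x^p / x = w⁻¹ := by
          have e : p - 1 = -β := by rw [hpdef]; ring
          calc x^p / x = x^(p-1) := (Real.rpow_sub_one hx0.ne' p).symm
            _ = x^(-β) := by rw [e]
            _ = w⁻¹ := by rw [Real.rpow_neg hx0.le, hwdef]
        have main : x^p * ((2/5)*t) ≤ x^p * ((1+t)^p - 1) :=
          mul_le_mul_of_nonneg_left (by nlinarith [chord, h75, ht0]) hxp0.le
        have eq1 : x^p * ((1+t)^p - 1) = (x+M)^p - x^p := by rw [e2]; ring
        have eq2 : x^p * ((2/5)*t) = (2/5)*M*(x^p/x) := by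
          rw [htdef]; field_simp
        rw [c5] at eq2
        linarith
      have hu : lam * M ≤ ((x+M)^p - x^p) / (C₁ * p) := by
        rw [le_div_iff₀ hCp]
        have e : lam * M * (C₁ * p) = (2/5) * M * w⁻¹ * p := by
          rw [hlamdef, hlam0def]; field_simp
        rw [e]
        have h1 : (2/5) * M * w⁻¹ * p ≤ (2/5) * M * w⁻¹ * 1 :=
          mul_le_mul_of_nonneg_left hp1 (by positivity)
        linarith
      have hexp : Real.exp (-(((x+M)^p - x^p) / (C₁ * p))) ≤ Real.exp (-(lam * M)) :=
        Real.exp_le_exp.mpr (neg_le_neg hu)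
      have hBs : (M + 2)^3 * Real.exp (-(lam * M)) ≤ B * s^m := by
        have cube := aux_cube (show (0:ℝ) ≤ lam*(M+2)/2 by positivity)
        have hcube2 : (M+2)^3 ≤ 216 * (lam⁻¹)^3 * Real.exp (lam*(M+2)/2) := by
          have e : (M+2)^3 = (lam⁻¹)^3 * 8 * (lam*(M+2)/2)^3 := by
            field_simp
            ring
          calc (M+2)^3 = (lam⁻¹)^3 * 8 * (lam*(M+2)/2)^3 := e
            _ ≤ (lam⁻¹)^3 * 8 * (27 * Real.exp (lam*(M+2)/2)) :=
                mul_le_mul_of_nonneg_left cube (by positivity)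
            _ = 216 * (lam⁻¹)^3 * Real.exp (lam*(M+2)/2) := by ring
        have es : s^m = Real.exp (-(lam/2)*M) := by
          rw [hsdef, ← Real.exp_nat_mul, ← hMdef]
          congr 1
          ring
        calc (M+2)^3 * Real.exp (-(lam*M))
            ≤ (216 * (lam⁻¹)^3 * Real.exp (lam*(M+2)/2)) * Real.exp (-(lam*M)) :=
              mul_le_mul_of_nonneg_right hcube2 (Real.exp_nonneg _)
          _ = 216 * (lam⁻¹)^3 * Real.exp (lam*(M+2)/2 + -(lam*M)) := by
              rw [mul_assoc, ← Real.exp_add]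
          _ ≤ 216 * (lam⁻¹)^3 * Real.exp (2*lam + -(lam/2)*M) := by
              apply mul_le_mul_of_nonneg_left (Real.exp_le_exp.mpr (by nlinarith [hlam0.le, hM0])) (by positivity)
          _ = B * s^m := by rw [hBdef, es, Real.exp_add]; ring
      have hh2pos : 0 ≤ h2 m := by rw [hh2def]; positivity
      calc (M + 2)^3 * Real.exp (-(((x+M)^p - x^p) / (C₁ * p)))
          ≤ (M + 2)^3 * Real.exp (-(lam * M)) :=
            mul_le_mul_of_nonneg_left hexp (by positivity)
        _ ≤ B * s^m := hBs
        _ ≤ B * s^m + h2 m := by linarith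
    · -- large m : exponent ≥ c₂ * M^p
      have hdiff : M^p / 4 ≤ (x+M)^p - x^p := by
        have h75 : (7:ℝ)/5 ≤ 2^p := by
          have h5 := Real.rpow_le_rpow_of_exponent_le (by norm_num : (1:ℝ) ≤ 2)
            (show (1:ℝ)/2 ≤ p by linarith)
          linarith [aux_sqrt2]
        have hA0 : 0 < (x+M)^p := Real.rpow_pos_of_pos (by linarith) p
        have h2p0 : (0:ℝ) < 2^p := Real.rpow_pos_of_pos (by norm_num) p
        have hstep1 : x^p ≤ (x+M)^p / 2^p := by
          have h1 : x^p ≤ ((x+M)/2)^p :=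
            Real.rpow_le_rpow hx0.le (by linarith) hp0.le
          rwa [Real.div_rpow (by linarith) (by norm_num)] at h1
        have hAdiv : (x+M)^p / 2^p ≤ (5/7) * (x+M)^p := by
          rw [div_le_iff₀ h2p0]
          nlinarith [hA0.le, h75]
        have hMA : M^p ≤ (x+M)^p :=
          Real.rpow_le_rpow hM0 (by linarith) hp0.le
        linarith
      have hu : c₂ * M^p ≤ ((x+M)^p - x^p) / (C₁ * p) := by
        rw [le_div_iff₀ hCp]
        have e : c₂ * M^p * (C₁ * p) = (1/4) * M^p * p := by
          rw [hc₂def]; field_simp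
        rw [e]
        have hMp0 : (0:ℝ) ≤ M^p := Real.rpow_nonneg hM0 p
        have h1 : (1/4) * M^p * p ≤ (1/4) * M^p * 1 :=
          mul_le_mul_of_nonneg_left hp1 (by positivity)
        linarith
      have hexp : Real.exp (-(((x+M)^p - x^p) / (C₁ * p))) ≤ Real.exp (-(c₂ * M^p)) :=
        Real.exp_le_exp.mpr (neg_le_neg hu)
      have hBs0 : 0 ≤ B * s^m := by positivity
      have : (M + 2)^3 * Real.exp (-(((x+M)^p - x^p) / (C₁ * p))) ≤ h2 m := by
        rw [hh2def]
        exact mul_le_mul_of_nonneg_left hexp (by positivity)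
      linarith
  -- summability and tsum comparison
  have hgeo : Summable (fun m : ℕ => B * s^m) :=
    (summable_geometric_of_lt_one hs0.le hs1).mul_left B
  have hg : Summable (fun m : ℕ => B * s^m + h2 m) := hgeo.add hsum2
  have hf : Summable (fun m : ℕ => ((m : ℝ) + 2) ^ 3 *
      Real.exp (-((((n : ℝ) + (m : ℝ) + 2) ^ p - x ^ p) / (C₁ * p)))) :=
    Summable.of_nonneg_of_le (fun m => by positivity) hkey hg
  have hle : (∑' m : ℕ, ((m : ℝ) + 2) ^ 3 *
      Real.exp (-((((n : ℝ) + (m : ℝ) + 2) ^ p - x ^ p) / (C₁ * p)))) ≤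
      ∑' m : ℕ, (B * s^m + h2 m) := Summable.tsum_le_tsum hkey hf hg
  have hgval : (∑' m : ℕ, (B * s^m + h2 m)) = B * (1-s)⁻¹ + T := by
    rw [Summable.tsum_add hgeo hsum2, tsum_mul_left, tsum_geometric_of_lt_one hs0.le hs1, hTdef]
  -- bound the geometric part
  have hgeobd : B * (1-s)⁻¹ ≤ K * w^4 := by
    have hs_le : s ≤ (1+lam/2)⁻¹ := by
      rw [hsdef, Real.exp_neg]
      exact inv_anti₀ (by positivity) (by linarith [Real.add_one_le_exp (lam/2)])
    have h1ms : lam/2/(1+lam/2) ≤ 1 - s := by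
      have e2 : lam/2/(1+lam/2) = 1 - (1+lam/2)⁻¹ := by
        field_simp
        ring
      rw [e2]; linarith
    have h1ms0 : 0 < 1 - s :=
      lt_of_lt_of_le (show (0:ℝ) < lam/2/(1+lam/2) by positivity) h1ms
    have hinv : (1-s)⁻¹ ≤ 1 + 2/lam := by
      have h3 : (1-s)⁻¹ ≤ (lam/2/(1+lam/2))⁻¹ :=
        inv_anti₀ (by positivity) h1ms
      have e : (lam/2/(1+lam/2))⁻¹ = 1 + 2/lam := by
        rw [inv_div]; field_simp; ring
      rw [e] at h3; exact h3
    have hli : lam⁻¹ = w/lam0 := by rw [hlamdef, inv_div]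
    have hw34 : w^3 ≤ w^4 := pow_le_pow_right₀ hw1 (by norm_num)
    have hli2 : lam⁻¹ = w * lam0⁻¹ := by rw [hli, div_eq_mul_inv]
    have e3 : lam0 * (lam0⁻¹)^4 = (lam0⁻¹)^3 := by
      field_simp
    have hmid : (lam⁻¹)^3 + 2*(lam⁻¹)^4 ≤ (lam0+2)*(lam0⁻¹)^4*w^4 := by
      rw [hli2, mul_pow, mul_pow, ← e3]
      nlinarith [mul_nonneg (mul_nonneg hlam00.le (sub_nonneg.mpr hw34))
        (pow_nonneg (inv_nonneg.mpr hlam00.le) 4)]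
    calc B * (1-s)⁻¹ ≤ B * (1 + 2/lam) := mul_le_mul_of_nonneg_left hinv hB0.le
      _ = 216 * Real.exp (2*lam) * ((lam⁻¹)^3 + 2*(lam⁻¹)^4) := by
          rw [hBdef]; field_simp
      _ ≤ 216 * Real.exp (2*lam0) * ((lam⁻¹)^3 + 2*(lam⁻¹)^4) := by
          apply mul_le_mul_of_nonneg_right
            (mul_le_mul_of_nonneg_left (Real.exp_le_exp.mpr (by linarith)) (by norm_num))
            (by positivity)
      _ ≤ 216 * Real.exp (2*lam0) * ((lam0+2)*(lam0⁻¹)^4*w^4) :=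
          mul_le_mul_of_nonneg_left hmid (by positivity)
      _ = K * w^4 := by rw [hKdef]; ring
  have hw4 : K * w^4 ≤ K * x^(5*β) := by
    have e1 : w^4 = x ^ (β * (4:ℝ)) := by
      rw [hwdef, ← Real.rpow_natCast (x ^ β) 4, ← Real.rpow_mul hx0.le]
      norm_num
    have e2 : x ^ (β * (4:ℝ)) ≤ x ^ (5*β) :=
      Real.rpow_le_rpow_of_exponent_le hx1 (by linarith)
    rw [e1]
    exact mul_le_mul_of_nonneg_left e2 hK0.le
  have hx5b1 : (1:ℝ) ≤ x^(5*β) := Real.one_le_rpow hx1 (by positivity)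
  have hx5b0 : (0:ℝ) ≤ x^(5*β) := by linarith
  have hTb : T ≤ T * x^(5*β) := le_mul_of_one_le_right hT0 hx5b1
  calc (∑' m : ℕ, ((m : ℝ) + 2) ^ 3 *
      Real.exp (-((((n : ℝ) + (m : ℝ) + 2) ^ p - x ^ p) / (C₁ * p))))
      ≤ B * (1-s)⁻¹ + T := by rw [← hgval]; exact hle
    _ ≤ K * x^(5*β) + T * x^(5*β) := by linarith [le_trans hgeobd hw4]
    _ ≤ (K + T + 1) * x^(5*β) := by nlinarith [hx5b0]
end

section
/- Let δ ∈ (1/3, 1), c ≥ 0 and b > 0, let f: ℕ → ℝ satisfy f(i) ≤ b·log²(i+1) for all i, and define θ̃(n) = n^{−δ} Σ_{i=0}^{n−1} f(i) for n ≥ 1. Suppose there exists a strictly increasing sequence (n_k)_{k≥1} of positive integers such that θ̃(n_k) < c for every k and lim_{k→∞} (n_{k+1} − n_k)/n_k^{1/3} = 0. Then limsup_{n→∞} θ̃(n) ≤ c. -/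
open Filter

private lemma aux_psi_tendsto (δ : ℝ) (hδl : 1 / 3 < δ) :
    Tendsto (fun x : ℝ => (Real.log x) ^ 2 * x ^ ((1 : ℝ) / 3 - δ)) atTop (nhds 0) := by
  have h := (isLittleO_log_rpow_rpow_atTop (2 : ℝ)
    (show (0 : ℝ) < δ - 1 / 3 by linarith)).tendsto_div_nhds_zero
  apply h.congr'
  filter_upwards [eventually_ge_atTop (1 : ℝ)] with x hx
  have hx0 : (0 : ℝ) < x := by linarith
  have h2 : Real.log x ^ (2 : ℝ) = Real.log x ^ (2 : ℕ) := by
    rw [← Real.rpow_natCast (Real.log x) 2]; norm_num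
  rw [h2, show (1 : ℝ) / 3 - δ = -(δ - 1 / 3) by ring, Real.rpow_neg hx0.le, div_eq_mul_inv]

set_option maxHeartbeats 1600000 in
/-- Final deterministic step of Theorem 3: if the pseudo average θ̃(n) = n^{−δ} Σ_{i<n} f(i),
built from summands bounded by b·log²(i+1), returns below the nonnegative level c at a
strictly increasing sequence of times n_k whose gaps are o(n_k^{1/3}), then
limsup θ̃(n) ≤ c. -/
theorem stmt_17 (δ c b : ℝ) (hδl : 1 / 3 < δ) (hδu : δ < 1) (hc : 0 ≤ c) (hb : 0 < b)
    (f : ℕ → ℝ) (hf : ∀ i : ℕ, f i ≤ b * (Real.log ((i : ℝ) + 1)) ^ 2)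
    (nk : ℕ → ℕ) (hmono : StrictMono nk) (hpos : ∀ k, 0 < nk k)
    (hbelow : ∀ k, (∑ i ∈ Finset.range (nk k), f i) / (nk k : ℝ) ^ δ < c)
    (hgap : Tendsto (fun k : ℕ => ((nk (k + 1) : ℝ) - (nk k : ℝ)) / (nk k : ℝ) ^ ((1 : ℝ) / 3))
      atTop (nhds 0)) :
    limsup (fun n : ℕ =>
        (((∑ i ∈ Finset.range n, f i) / (n : ℝ) ^ δ : ℝ) : EReal)) atTop ≤ (c : EReal) := by
  set S : ℕ → ℝ := fun n => ∑ i ∈ Finset.range n, f i with hS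
  set g : ℕ → ℝ := fun n => S n / (n : ℝ) ^ δ with hg
  have hδ0 : (0 : ℝ) < δ := by linarith
  set E : ℕ → ℝ := fun k =>
    ((nk (k + 1) : ℝ) - (nk k : ℝ)) * (b * Real.log ((nk (k + 1) : ℝ) + 1) ^ 2) / (nk k : ℝ) ^ δ
    with hE
  -- basic positivity facts
  have hnkpos : ∀ k, (0 : ℝ) < (nk k : ℝ) := fun k => by exact_mod_cast hpos k
  have hnk1 : ∀ k, (1 : ℝ) ≤ (nk k : ℝ) := fun k => by exact_mod_cast hpos k
  have hgapnn : ∀ k, (0 : ℝ) ≤ (nk (k + 1) : ℝ) - (nk k : ℝ) := fun k => by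
    have := hmono (Nat.lt_succ_self k)
    have : (nk k : ℝ) ≤ (nk (k + 1) : ℝ) := by exact_mod_cast this.le
    linarith
  -- Step A: interval bound
  have hA : ∀ k n, nk k ≤ n → n < nk (k + 1) → g n ≤ c + E k := by
    intro k n h1 h2
    have hn1 : (nk k : ℝ) ≤ (n : ℝ) := by exact_mod_cast h1
    have hnpos : (0 : ℝ) < (n : ℝ) := lt_of_lt_of_le (hnkpos k) hn1
    have hd1 : (0 : ℝ) < (nk k : ℝ) ^ δ := Real.rpow_pos_of_pos (hnkpos k) δ
    have hd2 : (0 : ℝ) < (n : ℝ) ^ δ := Real.rpow_pos_of_pos hnpos δ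
    have hdle : (nk k : ℝ) ^ δ ≤ (n : ℝ) ^ δ :=
      Real.rpow_le_rpow (hnkpos k).le hn1 hδ0.le
    set L : ℝ := Real.log ((nk (k + 1) : ℝ) + 1) with hLdef
    have hL0 : 0 ≤ L := Real.log_nonneg (by linarith [hnk1 (k + 1)])
    have hbL : 0 ≤ b * L ^ 2 := by positivity
    -- sum bound on the interval
    have hsum : S n ≤ S (nk k) + ((n : ℝ) - (nk k : ℝ)) * (b * L ^ 2) := by
      have hsplit : (∑ i ∈ Finset.Ico (nk k) n, f i) = S n - S (nk k) :=
        Finset.sum_Ico_eq_sub f h1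
      have hbound : (∑ i ∈ Finset.Ico (nk k) n, f i)
          ≤ (Finset.Ico (nk k) n).card • (b * L ^ 2) := by
        apply Finset.sum_le_card_nsmul
        intro i hi
        have hi2 : i < n := (Finset.mem_Ico.mp hi).2
        have hcast : (i : ℝ) + 1 ≤ (nk (k + 1) : ℝ) + 1 := by
          have : i + 1 ≤ nk (k + 1) := Nat.succ_le_of_lt (lt_of_lt_of_le hi2 h2.le)
          have : ((i : ℝ) + 1) ≤ (nk (k + 1) : ℝ) := by exact_mod_cast this
          linarith
        have hlog : Real.log ((i : ℝ) + 1) ≤ L :=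
          Real.log_le_log (by positivity) hcast
        have hlog0 : 0 ≤ Real.log ((i : ℝ) + 1) :=
          Real.log_nonneg (by push_cast; linarith [Nat.cast_nonneg (α := ℝ) i])
        calc f i ≤ b * Real.log ((i : ℝ) + 1) ^ 2 := hf i
          _ ≤ b * L ^ 2 := by
              have := pow_le_pow_left₀ hlog0 hlog 2
              nlinarith
      have hcard : ((Finset.Ico (nk k) n).card : ℝ) = (n : ℝ) - (nk k : ℝ) := by
        rw [Nat.card_Ico]
        exact Nat.cast_sub h1
      rw [hsplit] at hbound
      rw [nsmul_eq_mul, hcard] at hbound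
      linarith
    have hsum2 : S n ≤ S (nk k) + ((nk (k + 1) : ℝ) - (nk k : ℝ)) * (b * L ^ 2) := by
      have hle : (n : ℝ) ≤ (nk (k + 1) : ℝ) := by exact_mod_cast h2.le
      nlinarith
    have hfirst : S (nk k) / (n : ℝ) ^ δ ≤ c := by
      rcases le_or_gt 0 (S (nk k)) with hpos' | hneg
      · calc S (nk k) / (n : ℝ) ^ δ ≤ S (nk k) / (nk k : ℝ) ^ δ := by
              apply div_le_div_of_nonneg_left hpos' hd1 hdle
          _ ≤ c := (hbelow k).le
      · have : S (nk k) / (n : ℝ) ^ δ < 0 := div_neg_of_neg_of_pos hneg hd2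
        linarith
    have hsecond : ((nk (k + 1) : ℝ) - (nk k : ℝ)) * (b * L ^ 2) / (n : ℝ) ^ δ ≤ E k := by
      rw [hE]
      apply div_le_div_of_nonneg_left _ hd1 hdle
      exact mul_nonneg (hgapnn k) hbL
    have hdiv : S n / (n : ℝ) ^ δ
        ≤ (S (nk k) + ((nk (k + 1) : ℝ) - (nk k : ℝ)) * (b * L ^ 2)) / (n : ℝ) ^ δ := by
      gcongr
    rw [add_div] at hdiv
    have hgn : g n = S n / (n : ℝ) ^ δ := rfl
    linarith [hdiv]
  -- Step B: E → 0
  have hnk_top : Tendsto (fun k => (nk k : ℝ)) atTop atTop :=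
    tendsto_natCast_atTop_atTop.comp hmono.tendsto_atTop
  have hEtend : Tendsto E atTop (nhds 0) := by
    have hev1 : ∀ᶠ k in atTop, ((nk (k + 1) : ℝ) - (nk k : ℝ)) / (nk k : ℝ) ^ ((1 : ℝ) / 3) ≤ 1 := by
      have : ∀ᶠ x in nhds (0 : ℝ), x ≤ 1 := eventually_le_nhds (by norm_num)
      exact hgap.eventually this
    have hev2 : ∀ᶠ k in atTop, (3 : ℝ) ≤ (nk k : ℝ) := hnk_top.eventually_ge_atTop 3
    have hbnd : ∀ᶠ k in atTop, E k ≤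
        (((nk (k + 1) : ℝ) - (nk k : ℝ)) / (nk k : ℝ) ^ ((1 : ℝ) / 3)) *
          (4 * b * ((Real.log (nk k : ℝ)) ^ 2 * (nk k : ℝ) ^ ((1 : ℝ) / 3 - δ))) := by
      filter_upwards [hev1, hev2] with k h1 h3
      have hx : (0 : ℝ) < (nk k : ℝ) := hnkpos k
      have hx1 : (1 : ℝ) ≤ (nk k : ℝ) := by linarith
      have hr13 : (0 : ℝ) < (nk k : ℝ) ^ ((1 : ℝ) / 3) := Real.rpow_pos_of_pos hx _
      have hrδ : (0 : ℝ) < (nk k : ℝ) ^ δ := Real.rpow_pos_of_pos hx _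
      -- nk(k+1) + 1 ≤ 3 * nk k
      have hg1 : (nk (k + 1) : ℝ) - (nk k : ℝ) ≤ (nk k : ℝ) ^ ((1 : ℝ) / 3) :=
        (div_le_one hr13).mp h1
      have hr13le : (nk k : ℝ) ^ ((1 : ℝ) / 3) ≤ (nk k : ℝ) := by
        calc (nk k : ℝ) ^ ((1 : ℝ) / 3) ≤ (nk k : ℝ) ^ (1 : ℝ) :=
              Real.rpow_le_rpow_of_exponent_le hx1 (by norm_num)
          _ = (nk k : ℝ) := Real.rpow_one _
      have h3n : (nk (k + 1) : ℝ) + 1 ≤ 3 * (nk k : ℝ) := by linarith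
      have hL3 : Real.log ((nk (k + 1) : ℝ) + 1) ≤ 2 * Real.log (nk k : ℝ) := by
        calc Real.log ((nk (k + 1) : ℝ) + 1) ≤ Real.log (3 * (nk k : ℝ)) :=
              Real.log_le_log (by linarith [hnk1 (k + 1)]) h3n
          _ = Real.log 3 + Real.log (nk k : ℝ) := Real.log_mul (by norm_num) hx.ne'
          _ ≤ 2 * Real.log (nk k : ℝ) := by
              have : Real.log 3 ≤ Real.log (nk k : ℝ) := Real.log_le_log (by norm_num) h3
              linarith
      have hL0 : 0 ≤ Real.log ((nk (k + 1) : ℝ) + 1) :=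
        Real.log_nonneg (by linarith [hnk1 (k + 1)])
      have hlogk0 : 0 ≤ Real.log (nk k : ℝ) := Real.log_nonneg hx1
      have hLsq : Real.log ((nk (k + 1) : ℝ) + 1) ^ 2 ≤ 4 * Real.log (nk k : ℝ) ^ 2 := by
        nlinarith
      -- rewrite RHS
      have hrw : (nk k : ℝ) ^ ((1 : ℝ) / 3 - δ) = (nk k : ℝ) ^ ((1 : ℝ) / 3) / (nk k : ℝ) ^ δ :=
        Real.rpow_sub hx _ _
      have hRHS : (((nk (k + 1) : ℝ) - (nk k : ℝ)) / (nk k : ℝ) ^ ((1 : ℝ) / 3)) *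
            (4 * b * ((Real.log (nk k : ℝ)) ^ 2 * (nk k : ℝ) ^ ((1 : ℝ) / 3 - δ)))
          = ((nk (k + 1) : ℝ) - (nk k : ℝ)) * (4 * b * (Real.log (nk k : ℝ)) ^ 2)
            / (nk k : ℝ) ^ δ := by
        rw [hrw]
        field_simp
      rw [hRHS]
      simp only [hE]
      refine (div_le_div_iff_of_pos_right hrδ).mpr ?_
      have hnum : b * Real.log ((nk (k + 1) : ℝ) + 1) ^ 2
          ≤ 4 * b * Real.log (nk k : ℝ) ^ 2 := by nlinarith
      exact mul_le_mul_of_nonneg_left hnum (hgapnn k)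
    have hnn : ∀ᶠ k in atTop, 0 ≤ E k := by
      filter_upwards with k
      have : (0 : ℝ) < (nk k : ℝ) ^ δ := Real.rpow_pos_of_pos (hnkpos k) _
      have hL0 : 0 ≤ Real.log ((nk (k + 1) : ℝ) + 1) :=
        Real.log_nonneg (by linarith [hnk1 (k + 1)])
      simp only [hE]
      refine div_nonneg ?_ (Real.rpow_pos_of_pos (hnkpos k) _).le
      exact mul_nonneg (hgapnn k) (by positivity)
    have hprod : Tendsto (fun k =>
        (((nk (k + 1) : ℝ) - (nk k : ℝ)) / (nk k : ℝ) ^ ((1 : ℝ) / 3)) *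
          (4 * b * ((Real.log (nk k : ℝ)) ^ 2 * (nk k : ℝ) ^ ((1 : ℝ) / 3 - δ))))
        atTop (nhds 0) := by
      have h2 : Tendsto (fun k => 4 * b *
          ((Real.log (nk k : ℝ)) ^ 2 * (nk k : ℝ) ^ ((1 : ℝ) / 3 - δ))) atTop (nhds 0) := by
        have := ((aux_psi_tendsto δ hδl).comp hnk_top).const_mul (4 * b)
        simpa using this
      simpa using hgap.mul h2
    exact squeeze_zero' hnn hbnd hprod
  -- Step C: eventual bound for every ε > 0
  have hCE : ∀ ε : ℝ, 0 < ε → ∀ᶠ n in atTop, g n ≤ c + ε := by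
    intro ε hε
    have hev : ∀ᶠ k in atTop, E k < ε := hEtend.eventually (gt_mem_nhds hε)
    obtain ⟨K, hK⟩ := eventually_atTop.mp hev
    refine eventually_atTop.mpr ⟨nk K, fun n hn => ?_⟩
    have hKn : K ≤ n := le_trans hmono.le_apply hn
    set k := Nat.findGreatest (fun j => nk j ≤ n) n with hk
    have hk1 : nk k ≤ n :=
      Nat.findGreatest_spec (P := fun j => nk j ≤ n) hKn hn
    have hKk : K ≤ k := Nat.le_findGreatest (P := fun j => nk j ≤ n) hKn hn
    have hk2 : n < nk (k + 1) := by
      by_contra hcon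
      push_neg at hcon
      have h1 : k + 1 ≤ n := le_trans hmono.le_apply hcon
      have h2 : k + 1 ≤ k := Nat.le_findGreatest (P := fun j => nk j ≤ n) h1 hcon
      omega
    have := hA k n hk1 hk2
    have := hK k hKk
    linarith
  -- Step D: conclude for EReal limsup
  have hlim : ∀ ε : ℝ, 0 < ε →
      limsup (fun n : ℕ => ((g n : ℝ) : EReal)) atTop ≤ ((c + ε : ℝ) : EReal) := by
    intro ε hε
    refine limsup_le_of_le (by isBoundedDefault) ?_
    filter_upwards [hCE ε hε] with n hle
    exact_mod_cast hle
  by_contra hcon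
  push_neg at hcon
  obtain ⟨d, hd1, hd2⟩ := exists_between hcon
  have hΛle : limsup (fun n : ℕ => ((g n : ℝ) : EReal)) atTop ≤ ((c + 1 : ℝ) : EReal) :=
    hlim 1 one_pos
  have hdtop : d ≠ ⊤ := by
    intro h
    rw [h] at hd2
    exact absurd (lt_of_lt_of_le hd2 hΛle) (by simp)
  have hdbot : d ≠ ⊥ := by
    intro h
    rw [h] at hd1
    exact absurd hd1 (by simp)
  lift d to ℝ using ⟨hdtop, hdbot⟩ with dr hdr
  have hcd : c < dr := EReal.coe_lt_coe_iff.mp hd1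
  have := hlim (dr - c) (by linarith)
  rw [show c + (dr - c) = dr by ring] at this
  exact absurd (lt_of_lt_of_le hd2 this) (lt_irrefl _)
end
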